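/- arXiv:2504.05935 — 4 statements merged into one kernel-verified Lean document; each statement's English description precedes it below -/
import Mathlib

section
/- Let m̂ ∈ P₂(ℝ^d), R > 0, φ ∈ UC_m̂, κ ∈ (0,1], ε > 0, m ∈ B_R(m̂), and let μ̄ be an Ekeland point for (φ,κ,ε,m). Then W₂(m,μ̄) ≤ M_κ^ε(R), where M_κ^ε(R) = κ√(2S(R)+ε²κ²) − εκ². -/
open MeasureTheory Set Filter Topology
open scoped ENNReal NNReal InnerProductSpace

noncomputable section

/-- `ℝ^d` with the Euclidean structure. -/
abbrev Ed (d : ℕ) : Type := EuclideanSpace ℝ (Fin d)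

/-- A Borel probability measure with finite second moment. -/
def IsP2Meas {E : Type*} [NormedAddCommGroup E] [MeasurableSpace E] (μ : Measure E) : Prop :=
  IsProbabilityMeasure μ ∧ ∫⁻ x, (‖x‖₊ : ℝ≥0∞) ^ 2 ∂μ < ⊤

/-- The Wasserstein space `P₂(ℝ^d)` of Borel probability measures with finite second moment. -/
def P2 (d : ℕ) : Type := {μ : Measure (Ed d) // IsP2Meas μ}

/-- `ς₂(μ)`, the square root of the second moment of `μ`. -/
def varsigma2 {d : ℕ} (μ : P2 d) : ℝ :=
  Real.sqrt (∫⁻ x, (‖x‖₊ : ℝ≥0∞) ^ 2 ∂μ.1).toReal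

/-- `π` is a plan (coupling) between `μ` and `ν`. -/
def IsCoupling {d : ℕ} (π : Measure (Ed d × Ed d)) (μ ν : P2 d) : Prop :=
  π.map Prod.fst = μ.1 ∧ π.map Prod.snd = ν.1

/-- The quadratic transport cost of a plan. -/
def Wcost {d : ℕ} (π : Measure (Ed d × Ed d)) : ℝ≥0∞ :=
  ∫⁻ p, (‖p.1 - p.2‖₊ : ℝ≥0∞) ^ 2 ∂π

/-- The 2-Wasserstein distance. -/
def W2 {d : ℕ} (μ ν : P2 d) : ℝ :=
  Real.sqrt (⨅ π ∈ {π : Measure (Ed d × Ed d) | IsCoupling π μ ν}, Wcost π).toReal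

/-- `π ∈ Π_o(μ,ν)` : an optimal plan between `μ` and `ν`. -/
def IsOptPlan {d : ℕ} (π : Measure (Ed d × Ed d)) (μ ν : P2 d) : Prop :=
  IsCoupling π μ ν ∧ ∀ π' : Measure (Ed d × Ed d), IsCoupling π' μ ν → Wcost π ≤ Wcost π'

/-- The closed Wasserstein ball `B_R(m̂)`. -/
def ballW {d : ℕ} (mhat : P2 d) (R : ℝ) : Set (P2 d) := {μ | W2 mhat μ ≤ R}

/-- The open Wasserstein ball `O_R(m̂)`. -/
def oballW {d : ℕ} (mhat : P2 d) (R : ℝ) : Set (P2 d) := {μ | W2 mhat μ < R}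

/-- The Dirac measure at the origin as an element of `P₂(ℝ^d)`. -/
def dirac0 (d : ℕ) : P2 d :=
  ⟨Measure.dirac 0, ⟨by infer_instance, by rw [lintegral_dirac]; simp⟩⟩

/-- The class `UC_m̂` : nonnegative, uniformly continuous on every bounded set,
positive-definite at `m̂`. -/
structure UCmem {d : ℕ} (mhat : P2 d) (φ : P2 d → ℝ) : Prop where
  nonneg : ∀ μ : P2 d, 0 ≤ φ μ
  unif_cont : ∀ R > (0 : ℝ), ∀ η > (0 : ℝ), ∃ δ > (0 : ℝ), ∀ μ ν : P2 d,
    W2 mhat μ ≤ R → W2 mhat ν ≤ R → W2 μ ν ≤ δ → |φ μ - φ ν| ≤ η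
  zero_at : φ mhat = 0
  pos_off : ∀ μ : P2 d, μ ≠ mhat → 0 < φ μ

/-- The inf-convolution `φ_κ`. -/
def infConv {d : ℕ} (φ : P2 d → ℝ) (κ : ℝ) (m : P2 d) : ℝ :=
  ⨅ μ : P2 d, (φ μ + 1 / (2 * κ ^ 2) * W2 m μ ^ 2)

/-- `S(R) = sup_{μ ∈ B_R(m̂)} φ(μ)`. -/
def Sfun {d : ℕ} (mhat : P2 d) (φ : P2 d → ℝ) (R : ℝ) : ℝ := sSup (φ '' ballW mhat R)

/-- `I(R) = inf_{μ ∉ O_R(m̂)} φ(μ)`. -/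
def Ifun {d : ℕ} (mhat : P2 d) (φ : P2 d → ℝ) (R : ℝ) : ℝ := sInf (φ '' (oballW mhat R)ᶜ)

/-- `G_R = {μ : φ(μ) ≤ I(R)/2}`. -/
def Gset {d : ℕ} (mhat : P2 d) (φ : P2 d → ℝ) (R : ℝ) : Set (P2 d) :=
  {μ | φ μ ≤ Ifun mhat φ R / 2}

/-- `G_R^κ = {μ : φ_κ(μ) ≤ I(R)/2}`. -/
def GsetK {d : ℕ} (mhat : P2 d) (φ : P2 d → ℝ) (κ R : ℝ) : Set (P2 d) :=
  {μ | infConv φ κ μ ≤ Ifun mhat φ R / 2}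

/-- `𝓡(R) = sup{r ≥ 0 : B_r(m̂) ⊆ G_R}`. -/
def Rfun {d : ℕ} (mhat : P2 d) (φ : P2 d → ℝ) (R : ℝ) : ℝ :=
  sSup {r : ℝ | 0 ≤ r ∧ ballW mhat r ⊆ Gset mhat φ R}

/-- `M_κ^ε(R) = κ√(2S(R)+ε²κ²) − εκ²`. -/
def Mke {d : ℕ} (mhat : P2 d) (φ : P2 d → ℝ) (κ ε R : ℝ) : ℝ :=
  κ * Real.sqrt (2 * Sfun mhat φ R + ε ^ 2 * κ ^ 2) - ε * κ ^ 2

/-- `M^ε(R) = R + √(2S(R)+ε²)`. -/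
def Me {d : ℕ} (mhat : P2 d) (φ : P2 d → ℝ) (ε R : ℝ) : ℝ :=
  R + Real.sqrt (2 * Sfun mhat φ R + ε ^ 2)

/-- `ω_R^ε(δ)`, the modulus of continuity of `φ` on `B_{M^ε(R)}(m̂)`. -/
def omegaR {d : ℕ} (mhat : P2 d) (φ : P2 d → ℝ) (ε R δ : ℝ) : ℝ :=
  sSup {c : ℝ | ∃ ν₁ ν₂ : P2 d, W2 ν₁ ν₂ ≤ δ ∧ W2 mhat ν₁ ≤ Me mhat φ ε R ∧
    W2 mhat ν₂ ≤ Me mhat φ ε R ∧ c = |φ ν₁ - φ ν₂|}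

/-- `K_κ^ε(R) = εκ² + κ√(ε²κ² + 2ω_R^ε(M_κ^ε(R)))`. -/
def Kke {d : ℕ} (mhat : P2 d) (φ : P2 d → ℝ) (κ ε R : ℝ) : ℝ :=
  ε * κ ^ 2 + κ * Real.sqrt (ε ^ 2 * κ ^ 2 + 2 * omegaR mhat φ ε R (Mke mhat φ κ ε R))

/-- `N_κ^ε(R,m) = εκ√(2φ_κ(m)) + ε·M_κ^ε(R)`. -/
def Nke {d : ℕ} (mhat : P2 d) (φ : P2 d → ℝ) (κ ε R : ℝ) (m : P2 d) : ℝ :=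
  ε * κ * Real.sqrt (2 * infConv φ κ m) + ε * Mke mhat φ κ ε R

/-- `μ̄` is an Ekeland point for `(φ,κ,ε,m)`. -/
def EkelandPt {d : ℕ} (φ : P2 d → ℝ) (κ ε : ℝ) (m μb : P2 d) : Prop :=
  (φ μb + 1 / (2 * κ ^ 2) * W2 m μb ^ 2 ≤ φ m - ε * W2 μb m) ∧
  ∀ μ : P2 d, φ μb + 1 / (2 * κ ^ 2) * W2 m μb ^ 2 ≤
    φ μ + 1 / (2 * κ ^ 2) * W2 m μ ^ 2 + ε * W2 μb μ

/-- The proximal subgradient inequality at `m` with target `μ`, slope measure `α`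
and parameter `σ`. -/
def ProxIneq {d : ℕ} (φ : P2 d → ℝ) (ε σ : ℝ) (m : P2 d)
    (α : Measure (Ed d × Ed d)) (μ : P2 d) : Prop :=
  ∀ β : Measure (Ed d × Ed d × Ed d), IsP2Meas β →
    IsCoupling (β.map fun z => (z.1, z.2.1)) m μ →
    β.map (fun z => (z.1, z.2.2)) = α →
    φ m + ∫ z, ⟪z.2.2, z.2.1 - z.1⟫_ℝ ∂β - σ * ∫ z, ‖z.2.1 - z.1‖ ^ 2 ∂β
      - ε * W2 m μ ≤ φ μ

/-- `α ∈ ∂_P^ε φ(m)` : proximal `ε`-subgradient. -/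
def ProxSubgrad {d : ℕ} (φ : P2 d → ℝ) (ε : ℝ) (m : P2 d)
    (α : Measure (Ed d × Ed d)) : Prop :=
  IsP2Meas α ∧ ∃ σ > (0 : ℝ), ∃ r > (0 : ℝ), ∀ μ : P2 d, W2 m μ ≤ r → ProxIneq φ ε σ m α μ

/-- `(φ,ψ)` is a control-Lyapunov pair at `m̂` for the dynamics `f`, with threshold `ε₀`. -/
structure IsCLP {d : ℕ} {U : Type*} (f : Ed d → P2 d → U → Ed d) (mhat : P2 d)
    (φ : P2 d → ℝ) (ψ : P2 d → ℝ → ℝ) (ε₀ : ℝ) : Prop where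
  phi_uc : UCmem mhat φ
  psi_pos : ∀ (m : P2 d) (ε : ℝ), 0 < ε → 0 < ψ m ε
  psi_cont : ∀ (m : P2 d) (ε : ℝ), 0 < ε → ∀ η > (0 : ℝ), ∃ δ > (0 : ℝ),
    ∀ (m' : P2 d) (ε' : ℝ), 0 < ε' → W2 m m' < δ → |ε - ε'| < δ → |ψ m ε - ψ m' ε'| < η
  level_bdd : ∀ c : ℝ, ∃ K : ℝ, ∀ μ : P2 d, φ μ ≤ c → W2 mhat μ ≤ K
  psi_inf_pos : ∀ r R : ℝ, 0 < r → r < R → ∀ ε > (0 : ℝ), ∃ g > (0 : ℝ),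
    ∀ m : P2 d, W2 mhat m ≤ R → ¬ W2 mhat m < r → g ≤ ψ m ε
  psi_mono : ∀ (m : P2 d) (ε ε' : ℝ), 0 < ε → ε ≤ ε' → ψ m ε ≤ ψ m ε'
  eps0_pos : 0 < ε₀
  decrease : ∀ ε : ℝ, 0 < ε → ε < ε₀ → ∀ (m : P2 d) (α : Measure (Ed d × Ed d)),
    ProxSubgrad φ ε m α → ∃ u : U, ∫ z, ⟪z.2, f z.1 m u⟫_ℝ ∂α ≤ -ψ m ε

/-- A partition of `[0,∞)`. -/
def IsPartition (θ : ℕ → ℝ) : Prop :=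
  θ 0 = 0 ∧ StrictMono θ ∧ Tendsto θ atTop atTop

/-- The steps of the partition `θ` lie in `[δ₁, δ₂]` (i.e. `θ ∈ Θ(δ₁,δ₂)`). -/
def StepIn (θ : ℕ → ℝ) (δ₁ δ₂ : ℝ) : Prop :=
  ∀ i : ℕ, δ₁ ≤ θ (i + 1) - θ i ∧ θ (i + 1) - θ i ≤ δ₂

/-- `W₂`-continuity of a measure-valued curve on `[a,b]`. -/
def W2ContinuousOn {d : ℕ} (m : ℝ → P2 d) (a b : ℝ) : Prop :=
  ∀ t ∈ Icc a b, ∀ η > (0 : ℝ), ∃ δ > (0 : ℝ), ∀ s ∈ Icc a b, |s - t| < δ →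
    W2 (m s) (m t) < η

/-- `m` is a `W₂`-continuous distributional solution of the non-local continuity equation
`∂_t m_t + div(f(x,m_t,u) m_t) = 0` on `[a,b]` with constant control `u`. -/
def SolvesCE {d : ℕ} {U : Type*} (f : Ed d → P2 d → U → Ed d) (u : U)
    (m : ℝ → P2 d) (a b : ℝ) : Prop :=
  W2ContinuousOn m a b ∧
  ∀ χ : Ed d × ℝ → ℝ, ContDiff ℝ (⊤ : ℕ∞) χ → HasCompactSupport χ →
    tsupport χ ⊆ univ ×ˢ Ioo a b →
    ∫ t in a..b, ∫ x, (deriv (fun s : ℝ => χ (x, s)) t +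
      fderiv ℝ (fun y : Ed d => χ (y, t)) x (f x (m t) u)) ∂(m t).1 = 0

/-- A `θ`-trajectory of the controlled continuity equation under the feedback `k`,
starting from `m_*`. -/
def IsTraj {d : ℕ} {U : Type*} (f : Ed d → P2 d → U → Ed d) (k : P2 d → U)
    (θ : ℕ → ℝ) (mstar : P2 d) (m : ℝ → P2 d) : Prop :=
  m 0 = mstar ∧ ∀ i : ℕ, SolvesCE f (k (m (θ i))) m (θ i) (θ (i + 1))

/-- The extremal-shift value `∫ ((x−y)/κ²)·f(x,m,u) dπ(x,y)`. -/
def shiftVal {d : ℕ} {U : Type*} (f : Ed d → P2 d → U → Ed d) (κ : ℝ)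
    (π : Measure (Ed d × Ed d)) (m : P2 d) (u : U) : ℝ :=
  ∫ p, ⟪(κ ^ 2)⁻¹ • (p.1 - p.2), f p.1 m u⟫_ℝ ∂π

/-- `k` is an extremal-shift feedback associated with the plan selection `πsel`. -/
def IsExtremalShift {d : ℕ} {U : Type*} (f : Ed d → P2 d → U → Ed d) (κ : ℝ)
    (πsel : P2 d → Measure (Ed d × Ed d)) (k : P2 d → U) : Prop :=
  ∀ (m : P2 d) (u : U), shiftVal f κ (πsel m) m (k m) ≤ shiftVal f κ (πsel m) m u

/-- `C₂(R)` (computed with time-step bound `δ` and `s = ς₂(m̂)`). -/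
def C2const (C₁ δ s R : ℝ) : ℝ :=
  C₁ * Real.exp (C₁ * δ) * (1 + 2 * (C₁ * δ + s + R) * Real.exp (2 * C₁ * δ))

/-- `C₃(R)` (computed with time-step bound `δ` and `s = ς₂(m̂)`). -/
def C3const (C₀ C₁ δ s R : ℝ) : ℝ :=
  C₀ * (C₁ * Real.exp (C₁ * δ) * (1 + 2 * (C₁ * δ + s + R) * Real.exp (2 * C₁ * δ))
    + C2const C₁ δ s R)

/-- A feedback `k` is s-stabilizing at `m̂`. -/
def SStabilizing {d : ℕ} {U : Type*} (f : Ed d → P2 d → U → Ed d) (mhat : P2 d)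
    (k : P2 d → U) : Prop :=
  ∃ M : ℝ → ℝ, (∀ R > (0 : ℝ), 0 < M R) ∧
    Tendsto M (nhdsWithin 0 (Ioi 0)) (nhds 0) ∧
    ∀ r R : ℝ, 0 < r → r < R → ∃ δ > (0 : ℝ), ∃ T > (0 : ℝ),
      ∀ δhat : ℝ, 0 < δhat → δhat < δ →
      ∀ θ : ℕ → ℝ, IsPartition θ → StepIn θ δhat δ →
      ∀ mstar : P2 d, W2 mhat mstar ≤ R →
      ∀ m : ℝ → P2 d, IsTraj f k θ mstar m →
        (∀ t : ℝ, T ≤ t → W2 mhat (m t) ≤ r) ∧ (∀ t : ℝ, 0 ≤ t → W2 mhat (m t) ≤ M R)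
namespace S3aux

variable {d : ℕ}

/-- measurability of the cost integrand -/
lemma mcost_meas : Measurable fun p : Ed d × Ed d => (‖p.1 - p.2‖₊ : ℝ≥0∞) ^ 2 := by
  have : Continuous fun p : Ed d × Ed d => p.1 - p.2 := continuous_fst.sub continuous_snd
  exact ((this.nnnorm.measurable).coe_nnreal_ennreal).pow_const 2

lemma mnorm_meas : Measurable fun x : Ed d => (‖x‖₊ : ℝ≥0∞) ^ 2 :=
  ((continuous_nnnorm.measurable).coe_nnreal_ennreal).pow_const 2

lemma mf1 : Measurable fun p : Ed d × Ed d => (‖p.1‖₊ : ℝ≥0∞) ^ 2 :=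
  mnorm_meas.comp measurable_fst

lemma mf2 : Measurable fun p : Ed d × Ed d => (‖p.2‖₊ : ℝ≥0∞) ^ 2 :=
  mnorm_meas.comp measurable_snd

lemma mg1 : Measurable fun p : Ed d × Ed d => 2 * (‖p.1‖₊ : ℝ≥0∞) ^ 2 :=
  mf1.const_mul 2

lemma lint_fst (π : Measure (Ed d × Ed d)) (μ : Measure (Ed d)) (h : π.map Prod.fst = μ)
    {F : Ed d → ℝ≥0∞} (hF : Measurable F) : ∫⁻ p, F p.1 ∂π = ∫⁻ x, F x ∂μ := by
  rw [← h, lintegral_map hF measurable_fst]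

lemma lint_snd (π : Measure (Ed d × Ed d)) (ν : Measure (Ed d)) (h : π.map Prod.snd = ν)
    {F : Ed d → ℝ≥0∞} (hF : Measurable F) : ∫⁻ p, F p.2 ∂π = ∫⁻ x, F x ∂ν := by
  rw [← h, lintegral_map hF measurable_snd]

lemma sq_add_le (a b : ℝ≥0) : ((a + b : ℝ≥0) : ℝ≥0∞) ^ 2
    ≤ 2 * (a : ℝ≥0∞) ^ 2 + 2 * (b : ℝ≥0∞) ^ 2 := by
  have h : (a + b) ^ 2 ≤ 2 * a ^ 2 + 2 * b ^ 2 := by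
    have := sq_nonneg ((a : ℝ) - (b : ℝ))
    rw [← NNReal.coe_le_coe]
    push_cast
    nlinarith
  calc ((a + b : ℝ≥0) : ℝ≥0∞) ^ 2 = (((a + b) ^ 2 : ℝ≥0) : ℝ≥0∞) := by push_cast; ring
    _ ≤ ((2 * a ^ 2 + 2 * b ^ 2 : ℝ≥0) : ℝ≥0∞) := by exact_mod_cast ENNReal.coe_le_coe.2 h
    _ = 2 * (a : ℝ≥0∞) ^ 2 + 2 * (b : ℝ≥0∞) ^ 2 := by push_cast; ring

/-- a coupling has the same total mass as a probability measure, hence is one -/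
lemma coupling_prob {π : Measure (Ed d × Ed d)} {μ ν : P2 d} (h : IsCoupling π μ ν) :
    IsProbabilityMeasure π := by
  haveI : IsProbabilityMeasure μ.1 := μ.2.1
  constructor
  have h1 : π.map Prod.fst Set.univ = μ.1 Set.univ := by rw [h.1]
  rw [Measure.map_apply measurable_fst MeasurableSet.univ, Set.preimage_univ] at h1
  rw [h1, measure_univ]

/-- second-moment-type bound for a coupling -/
lemma coupling_cost_lt_top {π : Measure (Ed d × Ed d)} {μ ν : P2 d}
    (h : IsCoupling π μ ν) : Wcost π < ⊤ := by
  have hb : Wcost π ≤ 2 * (∫⁻ x, (‖x‖₊ : ℝ≥0∞) ^ 2 ∂μ.1) +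
      2 * (∫⁻ x, (‖x‖₊ : ℝ≥0∞) ^ 2 ∂ν.1) := by
    have hpt : ∀ p : Ed d × Ed d, (‖p.1 - p.2‖₊ : ℝ≥0∞) ^ 2 ≤
        2 * (‖p.1‖₊ : ℝ≥0∞) ^ 2 + 2 * (‖p.2‖₊ : ℝ≥0∞) ^ 2 := by
      intro p
      refine le_trans ?_ (sq_add_le ‖p.1‖₊ ‖p.2‖₊)
      have : ‖p.1 - p.2‖₊ ≤ ‖p.1‖₊ + ‖p.2‖₊ := nnnorm_sub_le _ _
      exact pow_le_pow_left₀ (by simp) (by exact_mod_cast this) 2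
    calc Wcost π ≤ ∫⁻ p, (2 * (‖p.1‖₊ : ℝ≥0∞) ^ 2 + 2 * (‖p.2‖₊ : ℝ≥0∞) ^ 2) ∂π :=
          lintegral_mono hpt
      _ = (∫⁻ p, 2 * (‖p.1‖₊ : ℝ≥0∞) ^ 2 ∂π) + ∫⁻ p, 2 * (‖p.2‖₊ : ℝ≥0∞) ^ 2 ∂π := by
          exact lintegral_add_left mg1 _
      _ = 2 * (∫⁻ p, (‖p.1‖₊ : ℝ≥0∞) ^ 2 ∂π) + 2 * (∫⁻ p, (‖p.2‖₊ : ℝ≥0∞) ^ 2 ∂π) := by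
          rw [lintegral_const_mul 2 mf1, lintegral_const_mul 2 mf2]
      _ = _ := by rw [lint_fst π μ.1 h.1 mnorm_meas, lint_snd π ν.1 h.2 mnorm_meas]
  refine lt_of_le_of_lt hb ?_
  exact ENNReal.add_lt_top.2 ⟨ENNReal.mul_lt_top (by simp) μ.2.2,
    ENNReal.mul_lt_top (by simp) ν.2.2⟩

/-- the product measure is a coupling -/
lemma prod_coupling (μ ν : P2 d) : IsCoupling (μ.1.prod ν.1) μ ν := by
  haveI : IsProbabilityMeasure μ.1 := μ.2.1
  haveI : IsProbabilityMeasure ν.1 := ν.2.1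
  constructor
  · rw [Measure.map_fst_prod]; simp
  · rw [Measure.map_snd_prod]; simp

def Winf (μ ν : P2 d) : ℝ≥0∞ := ⨅ π ∈ {π : Measure (Ed d × Ed d) | IsCoupling π μ ν}, Wcost π

lemma Winf_le {μ ν : P2 d} {π : Measure (Ed d × Ed d)} (h : IsCoupling π μ ν) :
    Winf μ ν ≤ Wcost π :=
  iInf_le_of_le π (iInf_le_of_le h le_rfl)

lemma Winf_lt_top (μ ν : P2 d) : Winf μ ν < ⊤ :=
  lt_of_le_of_lt (Winf_le (prod_coupling μ ν)) (coupling_cost_lt_top (prod_coupling μ ν))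

lemma W2_eq (μ ν : P2 d) : W2 μ ν = Real.sqrt (Winf μ ν).toReal := rfl

lemma W2_nonneg (μ ν : P2 d) : 0 ≤ W2 μ ν := Real.sqrt_nonneg _

lemma W2_sq (μ ν : P2 d) : W2 μ ν ^ 2 = (Winf μ ν).toReal := by
  rw [W2_eq, Real.sq_sqrt ENNReal.toReal_nonneg]

/-- any finite-cost coupling gives an upper bound on W2 -/
lemma W2_le_of_coupling {μ ν : P2 d} {π : Measure (Ed d × Ed d)} (h : IsCoupling π μ ν) :
    W2 μ ν ≤ Real.sqrt (Wcost π).toReal := by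
  rw [W2_eq]
  refine Real.sqrt_le_sqrt ?_
  exact ENNReal.toReal_mono (coupling_cost_lt_top h).ne (Winf_le h)

/-- near-optimal coupling -/
lemma exists_coupling (μ ν : P2 d) :
    ∃ π, IsCoupling π μ ν ∧ (Wcost π).toReal ≤ W2 μ ν ^ 2 + 1 := by
  have hfin := Winf_lt_top μ ν
  have hlt : Winf μ ν < Winf μ ν + 1 := ENNReal.lt_add_right hfin.ne one_ne_zero
  have hex : ∃ π, IsCoupling π μ ν ∧ Wcost π < Winf μ ν + 1 := by
    by_contra hcon
    push_neg at hcon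
    have hle : Winf μ ν + 1 ≤ Winf μ ν :=
      le_iInf₂ fun π hπ => hcon π hπ
    exact absurd (lt_of_lt_of_le hlt hle) (lt_irrefl _)
  obtain ⟨π, hc, hπ⟩ := hex
  refine ⟨π, hc, ?_⟩
  have hne : Winf μ ν + 1 ≠ ⊤ := ENNReal.add_ne_top.2 ⟨hfin.ne, ENNReal.one_ne_top⟩
  have := ENNReal.toReal_mono hne hπ.le
  rw [ENNReal.toReal_add hfin.ne ENNReal.one_ne_top] at this
  rw [W2_sq]
  simpa using this

lemma W2_comm (μ ν : P2 d) : W2 μ ν = W2 ν μ := by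
  have key : ∀ α β : P2 d, Winf β α ≤ Winf α β := by
    intro α β
    refine le_iInf₂ fun π hπ => ?_
    have hswap : IsCoupling (π.map Prod.swap) β α := by
      constructor
      · rw [Measure.map_map measurable_fst measurable_swap]
        exact hπ.2
      · rw [Measure.map_map measurable_snd measurable_swap]
        exact hπ.1
    refine le_trans (Winf_le hswap) ?_
    rw [Wcost, lintegral_map mcost_meas measurable_swap]
    refine le_of_eq (lintegral_congr fun p => ?_)
    simp only [Prod.fst_swap, Prod.snd_swap]
    rw [← neg_sub p.1 p.2, nnnorm_neg]
  rw [W2_eq, W2_eq, le_antisymm (key ν μ) (key μ ν)]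

/-- displacement interpolation along a coupling -/
def interp (t : ℝ) (p : Ed d × Ed d) : Ed d := (1 - t) • p.1 + t • p.2

lemma interp_meas (t : ℝ) : Measurable (interp (d := d) t) :=
  by unfold interp; exact (((continuous_fst (X := Ed d) (Y := Ed d)).const_smul (1 - t)).add
    ((continuous_snd (X := Ed d) (Y := Ed d)).const_smul t)).measurable

lemma interp_zero {μ ν : P2 d} {π : Measure (Ed d × Ed d)} (h : IsCoupling π μ ν) :
    π.map (interp 0) = μ.1 := by
  have : interp (d := d) 0 = Prod.fst := by funext p; simp [interp]
  rw [this, h.1]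

lemma interp_one {μ ν : P2 d} {π : Measure (Ed d × Ed d)} (h : IsCoupling π μ ν) :
    π.map (interp 1) = ν.1 := by
  have : interp (d := d) 1 = Prod.snd := by funext p; simp [interp]
  rw [this, h.2]

lemma interp_mem {μ ν : P2 d} {π : Measure (Ed d × Ed d)} (h : IsCoupling π μ ν)
    {t : ℝ} (ht : t ∈ Icc (0:ℝ) 1) : IsP2Meas (π.map (interp t)) := by
  haveI := coupling_prob h
  constructor
  · exact Measure.isProbabilityMeasure_map (interp_meas t).aemeasurable
  · rw [lintegral_map mnorm_meas (interp_meas t)]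
    have hpt : ∀ p : Ed d × Ed d, (‖interp t p‖₊ : ℝ≥0∞) ^ 2 ≤
        2 * (‖p.1‖₊ : ℝ≥0∞) ^ 2 + 2 * (‖p.2‖₊ : ℝ≥0∞) ^ 2 := by
      intro p
      refine le_trans ?_ (sq_add_le ‖p.1‖₊ ‖p.2‖₊)
      have hle : ‖interp t p‖₊ ≤ ‖p.1‖₊ + ‖p.2‖₊ := by
        refine le_trans (nnnorm_add_le _ _) (add_le_add ?_ ?_) <;>
        · rw [nnnorm_smul]
          refine mul_le_of_le_one_left zero_le ?_
          rw [← NNReal.coe_le_coe]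
          simp only [coe_nnnorm, Real.norm_eq_abs, NNReal.coe_one]
          rw [abs_le]
          constructor <;> [linarith [ht.1, ht.2]; linarith [ht.1, ht.2]]
      exact pow_le_pow_left₀ (by simp) (by exact_mod_cast hle) 2
    refine lt_of_le_of_lt (lintegral_mono hpt) ?_
    calc (∫⁻ p, (2 * (‖p.1‖₊ : ℝ≥0∞) ^ 2 + 2 * (‖p.2‖₊ : ℝ≥0∞) ^ 2) ∂π)
        = (∫⁻ p, 2 * (‖p.1‖₊ : ℝ≥0∞) ^ 2 ∂π) + ∫⁻ p, 2 * (‖p.2‖₊ : ℝ≥0∞) ^ 2 ∂π :=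
          lintegral_add_left mg1 _
      _ = 2 * (∫⁻ x, (‖x‖₊ : ℝ≥0∞) ^ 2 ∂μ.1) + 2 * (∫⁻ x, (‖x‖₊ : ℝ≥0∞) ^ 2 ∂ν.1) := by
          rw [lintegral_const_mul 2 mf1, lintegral_const_mul 2 mf2,
            lint_fst π μ.1 h.1 mnorm_meas, lint_snd π ν.1 h.2 mnorm_meas]
      _ < ⊤ := by
          exact ENNReal.add_lt_top.2
            ⟨ENNReal.mul_lt_top (by simp) μ.2.2, ENNReal.mul_lt_top (by simp) ν.2.2⟩

/-- W2 distance between two interpolants -/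
lemma W2_interp_le {μ ν : P2 d} {π : Measure (Ed d × Ed d)} (h : IsCoupling π μ ν)
    {s t : ℝ} (hs : s ∈ Icc (0:ℝ) 1) (ht : t ∈ Icc (0:ℝ) 1) :
    W2 ⟨π.map (interp s), interp_mem h hs⟩ ⟨π.map (interp t), interp_mem h ht⟩ ≤
      |t - s| * Real.sqrt (Wcost π).toReal := by
  set ρ : Measure (Ed d × Ed d) := π.map (fun p => (interp s p, interp t p)) with hρ
  have hmeas : Measurable fun p : Ed d × Ed d => (interp s p, interp t p) :=
    (interp_meas s).prodMk (interp_meas t)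
  have hcoup : IsCoupling ρ ⟨π.map (interp s), interp_mem h hs⟩
      ⟨π.map (interp t), interp_mem h ht⟩ := by
    constructor
    · rw [hρ, Measure.map_map measurable_fst hmeas]; rfl
    · rw [hρ, Measure.map_map measurable_snd hmeas]; rfl
  refine le_trans (W2_le_of_coupling hcoup) ?_
  have hcost : Wcost ρ = ((‖t - s‖₊ : ℝ≥0∞) ^ 2) * Wcost π := by
    rw [hρ, Wcost, lintegral_map mcost_meas hmeas]
    rw [Wcost, ← lintegral_const_mul _ mcost_meas]
    refine lintegral_congr fun p => ?_
    have hdiff : interp s p - interp t p = (t - s) • (p.1 - p.2) := by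
      simp only [interp]
      module
    rw [hdiff, nnnorm_smul]
    push_cast
    ring
  rw [hcost, ENNReal.toReal_mul]
  have h1 : (((‖t - s‖₊ : ℝ≥0∞) ^ 2)).toReal = |t - s| ^ 2 := by
    simp [← ENNReal.coe_pow, Real.norm_eq_abs]
  rw [h1, Real.sqrt_mul (sq_nonneg _), Real.sqrt_sq (abs_nonneg _)]

/-- φ is bounded on Wasserstein balls -/
lemma phi_bdd (mhat : P2 d) (φ : P2 d → ℝ) (hφ : UCmem mhat φ) (R : ℝ) (hR : 0 < R) :
    ∃ B : ℝ, ∀ μ ∈ ballW mhat R, φ μ ≤ B := by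
  obtain ⟨δ, hδpos, hδ⟩ := hφ.unif_cont (R + 1) (by linarith) 1 one_pos
  set N := ⌈(R + 1) / δ⌉₊ with hN
  have hNpos : 0 < N := Nat.ceil_pos.2 (div_pos (by linarith) hδpos)
  have hNge : (R + 1) / δ ≤ (N : ℝ) := Nat.le_ceil _
  refine ⟨N, fun μ hμ => ?_⟩
  obtain ⟨π, hπc, hπcost⟩ := exists_coupling mhat μ
  have hw : W2 mhat μ ≤ R := hμ
  have hC : Real.sqrt (Wcost π).toReal ≤ R + 1 := by
    have h2 : (Wcost π).toReal ≤ (R + 1) ^ 2 := by nlinarith [W2_nonneg mhat μ]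
    rw [show R + 1 = Real.sqrt ((R + 1) ^ 2) from (Real.sqrt_sq (by linarith)).symm]
    exact Real.sqrt_le_sqrt h2
  set C := Real.sqrt (Wcost π).toReal with hCdef
  have hCnn : 0 ≤ C := Real.sqrt_nonneg _
  -- interpolants
  have hmem : ∀ k : ℕ, k ≤ N → ((k : ℝ) / N) ∈ Icc (0:ℝ) 1 := by
    intro k hk
    constructor
    · positivity
    · rw [div_le_one (by exact_mod_cast hNpos)]
      exact_mod_cast hk
  set nu : ∀ k : ℕ, k ≤ N → P2 d :=
    fun k hk => ⟨π.map (interp ((k : ℝ) / N)), interp_mem hπc (hmem k hk)⟩ with hnu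
  have hmhat : ∀ (k : ℕ) (hk : k ≤ N), W2 mhat (nu k hk) ≤ R + 1 := by
    intro k hk
    have h0 : (⟨π.map (interp 0), interp_mem hπc (by norm_num)⟩ : P2 d) = mhat := by
      exact Subtype.ext (interp_zero hπc)
    have := W2_interp_le hπc (s := 0) (t := (k : ℝ) / N) (by norm_num) (hmem k hk)
    rw [h0] at this
    refine le_trans this ?_
    have habs : |(k : ℝ) / N - 0| ≤ 1 := by
      rw [sub_zero, abs_of_nonneg (hmem k hk).1]
      exact (hmem k hk).2
    calc |(k : ℝ) / N - 0| * C ≤ 1 * C := mul_le_mul_of_nonneg_right habs hCnn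
      _ = C := one_mul C
      _ ≤ R + 1 := hC
  have hstep : ∀ (k : ℕ) (hk : k + 1 ≤ N),
      W2 (nu k (le_of_lt (Nat.lt_of_succ_le hk)) : P2 d) (nu (k+1) hk) ≤ δ := by
    intro k hk
    have := W2_interp_le hπc (s := (k : ℝ) / N) (t := ((k+1 : ℕ) : ℝ) / N)
      (hmem k (le_of_lt (Nat.lt_of_succ_le hk))) (hmem (k+1) hk)
    refine le_trans this ?_
    have hNr : (0:ℝ) < (N : ℝ) := by exact_mod_cast hNpos
    have habs : |((k+1 : ℕ) : ℝ) / N - (k : ℝ) / N| = 1 / N := by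
      push_cast
      rw [div_sub_div_same, show ((k:ℝ) + 1 - k) = 1 by ring]
      rw [abs_of_nonneg (by positivity)]
    rw [habs]
    calc 1 / (N:ℝ) * C ≤ 1 / N * (R + 1) :=
          mul_le_mul_of_nonneg_left hC (by positivity)
      _ = (R + 1) / N := by ring
      _ ≤ δ := by
          rw [div_le_iff₀ hNr]
          calc R + 1 = ((R+1)/δ) * δ := by field_simp
            _ ≤ (N : ℝ) * δ := mul_le_mul_of_nonneg_right hNge hδpos.le
            _ = δ * N := mul_comm _ _
  -- induction: φ (nu k) ≤ k
  have hind : ∀ (k : ℕ) (hk : k ≤ N), φ (nu k hk) ≤ k := by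
    intro k
    induction k with
    | zero =>
      intro hk
      have h0 : (nu 0 hk : P2 d) = mhat := Subtype.ext (by
        rw [hnu]; simpa using interp_zero hπc)
      rw [h0, hφ.zero_at]
      norm_num
    | succ n ih =>
      intro hk
      have hn : n ≤ N := le_of_lt (Nat.lt_of_succ_le hk)
      have habsle := hδ (nu n hn) (nu (n+1) hk) (hmhat n hn) (hmhat (n+1) hk) (hstep n hk)
      have := abs_le.1 habsle
      have := ih hn
      push_cast
      linarith [(abs_le.1 habsle).1]
  have hfin := hind N le_rfl
  have hμeq : (nu N le_rfl : P2 d) = μ := by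
    refine Subtype.ext ?_
    have : ((N : ℝ) / N) = (1:ℝ) := by
      field_simp
    simp only [hnu, this]
    exact interp_one hπc
  rw [hμeq] at hfin
  exact hfin

end S3aux
/-- distance estimate for Ekeland points. -/
theorem statement3 {d : ℕ} (mhat : P2 d) (R : ℝ) (hR : 0 < R)
    (φ : P2 d → ℝ) (hφ : UCmem mhat φ) (κ ε : ℝ) (hκ : κ ∈ Ioc (0 : ℝ) 1) (hε : 0 < ε)
    (m : P2 d) (hm : W2 mhat m ≤ R) (μb : P2 d) (hek : EkelandPt φ κ ε m μb) :
    W2 m μb ≤ Mke mhat φ κ ε R := by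
  obtain ⟨hκ0, hκ1⟩ := hκ
  have hκ2 : (0:ℝ) < κ ^ 2 := by positivity
  obtain ⟨B, hB⟩ := S3aux.phi_bdd mhat φ hφ R hR
  have hbdd : BddAbove (φ '' ballW mhat R) := by
    refine ⟨B, fun y hy => ?_⟩
    obtain ⟨μ, hμ, rfl⟩ := hy
    exact hB μ hμ
  have hφm : φ m ≤ Sfun mhat φ R := le_csSup hbdd ⟨m, hm, rfl⟩
  set W := W2 m μb with hWdef
  have hWnn : 0 ≤ W := S3aux.W2_nonneg m μb
  have h1 := hek.1
  rw [S3aux.W2_comm μb m] at h1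
  have hφb : 0 ≤ φ μb := hφ.nonneg μb
  set S := Sfun mhat φ R with hS
  have hsum : 1 / (2 * κ ^ 2) * W ^ 2 + ε * W ≤ S := by linarith
  have hkey : W ^ 2 + 2 * κ ^ 2 * (ε * W) ≤ 2 * κ ^ 2 * S := by
    have h2 := mul_le_mul_of_nonneg_left hsum (le_of_lt (by positivity : (0:ℝ) < 2 * κ ^ 2))
    have e : 2 * κ ^ 2 * (1 / (2 * κ ^ 2) * W ^ 2) = W ^ 2 := by field_simp
    nlinarith [h2, e]
  have hSnn : 0 ≤ S := by
    have hc : 0 ≤ 1 / (2 * κ ^ 2) * W ^ 2 := by positivity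
    have hd : 0 ≤ ε * W := mul_nonneg hε.le hWnn
    linarith
  set A := 2 * S + ε ^ 2 * κ ^ 2 with hA
  have hAnn : 0 ≤ A := by positivity
  have hsq : (W + ε * κ ^ 2) ^ 2 ≤ (κ * Real.sqrt A) ^ 2 := by
    rw [mul_pow, Real.sq_sqrt hAnn]
    nlinarith [hkey]
  have hfin : W + ε * κ ^ 2 ≤ κ * Real.sqrt A := by
    have h3 : 0 ≤ W + ε * κ ^ 2 := by positivity
    calc W + ε * κ ^ 2 = Real.sqrt ((W + ε * κ ^ 2) ^ 2) := (Real.sqrt_sq h3).symm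
      _ ≤ Real.sqrt ((κ * Real.sqrt A) ^ 2) := Real.sqrt_le_sqrt hsq
      _ = κ * Real.sqrt A := Real.sqrt_sq (by positivity)
  rw [Mke]
  linarith
end
end

section
/- Let m̂ ∈ P₂(ℝ^d), R > 0, φ ∈ UC_m̂, κ ∈ (0,1], ε ∈ (0,1], m ∈ B_R(m̂), and let μ̄ be an Ekeland point for (φ,κ,ε,m). Then: (1) W₂(m,μ̄) ≤ K_κ^ε(R); (2) W₂(m̂,μ̄) ≤ M^ε(R). -/
open MeasureTheory Set Filter Topology
open scoped ENNReal NNReal InnerProductSpace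

noncomputable section

namespace P2Aux

open ProbabilityTheory

variable {d : ℕ}

lemma prob (μ : P2 d) : IsProbabilityMeasure μ.1 := μ.2.1

lemma mom_lt_top (μ : P2 d) : ∫⁻ x, (‖x‖₊ : ℝ≥0∞) ^ 2 ∂μ.1 < ⊤ := μ.2.2

noncomputable def Winf (μ ν : P2 d) : ℝ≥0∞ :=
  ⨅ π ∈ {π : Measure (Ed d × Ed d) | IsCoupling π μ ν}, Wcost π

lemma W2_def (μ ν : P2 d) : W2 μ ν = Real.sqrt (Winf μ ν).toReal := rfl

lemma W2_nonneg (μ ν : P2 d) : 0 ≤ W2 μ ν := Real.sqrt_nonneg _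

lemma meas_cost : Measurable fun p : Ed d × Ed d => (‖p.1 - p.2‖₊ : ℝ≥0∞) ^ 2 :=
  ((measurable_fst.sub measurable_snd).nnnorm.coe_nnreal_ennreal).pow_const 2

lemma lintegral_fst {π : Measure (Ed d × Ed d)} {μ : Measure (Ed d)} (h : π.map Prod.fst = μ)
    {f : Ed d → ℝ≥0∞} (hf : Measurable f) : ∫⁻ p, f p.1 ∂π = ∫⁻ x, f x ∂μ := by
  rw [← h, lintegral_map hf measurable_fst]

lemma lintegral_snd {π : Measure (Ed d × Ed d)} {μ : Measure (Ed d)} (h : π.map Prod.snd = μ)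
    {f : Ed d → ℝ≥0∞} (hf : Measurable f) : ∫⁻ p, f p.2 ∂π = ∫⁻ x, f x ∂μ := by
  rw [← h, lintegral_map hf measurable_snd]

lemma sq_nn_sub_le (x y : Ed d) :
    (‖x - y‖₊ : ℝ≥0∞) ^ 2 ≤ 2 * ((‖x‖₊ : ℝ≥0∞) ^ 2 + (‖y‖₊ : ℝ≥0∞) ^ 2) := by
  have h : (‖x - y‖₊ ^ 2 : ℝ≥0) ≤ 2 * (‖x‖₊ ^ 2 + ‖y‖₊ ^ 2) := by
    rw [← NNReal.coe_le_coe]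
    push_cast
    have h1 : ‖x - y‖ ≤ ‖x‖ + ‖y‖ := norm_sub_le x y
    have h2 : (0:ℝ) ≤ ‖x - y‖ := norm_nonneg _
    nlinarith [norm_nonneg x, norm_nonneg y, sq_nonneg (‖x‖ - ‖y‖)]
  calc (‖x - y‖₊ : ℝ≥0∞) ^ 2 = ((‖x - y‖₊ ^ 2 : ℝ≥0) : ℝ≥0∞) := by push_cast; ring
    _ ≤ ((2 * (‖x‖₊ ^ 2 + ‖y‖₊ ^ 2) : ℝ≥0) : ℝ≥0∞) := by exact_mod_cast ENNReal.coe_le_coe.mpr h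
    _ = 2 * ((‖x‖₊ : ℝ≥0∞) ^ 2 + (‖y‖₊ : ℝ≥0∞) ^ 2) := by push_cast; ring

lemma Wcost_lt_top {π : Measure (Ed d × Ed d)} {μ ν : P2 d} (h : IsCoupling π μ ν) :
    Wcost π < ⊤ := by
  have hb : Wcost π ≤ 2 * ((∫⁻ x, (‖x‖₊ : ℝ≥0∞) ^ 2 ∂μ.1) + ∫⁻ x, (‖x‖₊ : ℝ≥0∞) ^ 2 ∂ν.1) := by
    calc Wcost π ≤ ∫⁻ p, 2 * ((‖p.1‖₊ : ℝ≥0∞) ^ 2 + (‖p.2‖₊ : ℝ≥0∞) ^ 2) ∂π :=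
          lintegral_mono fun p => sq_nn_sub_le p.1 p.2
      _ = 2 * ((∫⁻ p, (‖p.1‖₊ : ℝ≥0∞) ^ 2 ∂π) + ∫⁻ p, (‖p.2‖₊ : ℝ≥0∞) ^ 2 ∂π) := by
          rw [lintegral_const_mul _ (show Measurable fun p : Ed d × Ed d =>
              (‖p.1‖₊ : ℝ≥0∞) ^ 2 + (‖p.2‖₊ : ℝ≥0∞) ^ 2 from
            (measurable_fst.nnnorm.coe_nnreal_ennreal.pow_const 2).add
            (measurable_snd.nnnorm.coe_nnreal_ennreal.pow_const 2)),
            lintegral_add_left (measurable_fst.nnnorm.coe_nnreal_ennreal.pow_const 2)]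
      _ = _ := by
          rw [lintegral_fst h.1 (measurable_nnnorm.coe_nnreal_ennreal.pow_const 2),
            lintegral_snd h.2 (measurable_nnnorm.coe_nnreal_ennreal.pow_const 2)]
  refine lt_of_le_of_lt hb ?_
  exact ENNReal.mul_lt_top (by norm_num) (ENNReal.add_lt_top.mpr ⟨mom_lt_top μ, mom_lt_top ν⟩)

lemma coupling_prod (μ ν : P2 d) : IsCoupling (μ.1.prod ν.1) μ ν := by
  haveI := prob μ; haveI := prob ν
  exact ⟨Measure.fst_prod, Measure.snd_prod⟩

lemma Winf_le {π : Measure (Ed d × Ed d)} {μ ν : P2 d} (h : IsCoupling π μ ν) :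
    Winf μ ν ≤ Wcost π := biInf_le _ h

lemma Winf_lt_top (μ ν : P2 d) : Winf μ ν < ⊤ :=
  lt_of_le_of_lt (Winf_le (coupling_prod μ ν)) (Wcost_lt_top (coupling_prod μ ν))

lemma W2_le_of_coupling {π : Measure (Ed d × Ed d)} {μ ν : P2 d} (h : IsCoupling π μ ν) :
    W2 μ ν ≤ Real.sqrt (Wcost π).toReal := by
  rw [W2_def]
  exact Real.sqrt_le_sqrt (ENNReal.toReal_mono (Wcost_lt_top h).ne (Winf_le h))

lemma Winf_eq_ofReal (μ ν : P2 d) : Winf μ ν = ENNReal.ofReal ((W2 μ ν) ^ 2) := by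
  rw [W2_def, Real.sq_sqrt ENNReal.toReal_nonneg, ENNReal.ofReal_toReal (Winf_lt_top μ ν).ne]

lemma exists_coupling_lt (μ ν : P2 d) {τ : ℝ} (hτ : 0 < τ) :
    ∃ π, IsCoupling π μ ν ∧ (Wcost π).toReal < (W2 μ ν) ^ 2 + τ := by
  have h1 : Winf μ ν < Winf μ ν + ENNReal.ofReal τ :=
    ENNReal.lt_add_right (Winf_lt_top μ ν).ne (ENNReal.ofReal_pos.mpr hτ).ne'
  rw [Winf, iInf_lt_iff] at h1
  obtain ⟨π, hlt⟩ := h1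
  rw [iInf_lt_iff] at hlt
  obtain ⟨hπ, hlt⟩ := hlt
  refine ⟨π, hπ, ?_⟩
  have hfin : Winf μ ν + ENNReal.ofReal τ ≠ ⊤ := by
    simp [ENNReal.add_ne_top, (Winf_lt_top μ ν).ne]
  have := ENNReal.toReal_strict_mono hfin hlt
  rwa [ENNReal.toReal_add (Winf_lt_top μ ν).ne ENNReal.ofReal_ne_top,
    Winf_eq_ofReal, ENNReal.toReal_ofReal (sq_nonneg _), ENNReal.toReal_ofReal hτ.le] at this

end P2Aux
namespace P2Aux

variable {d : ℕ}

lemma coupling_map {π : Measure (Ed d × Ed d)} {μ ν : P2 d} (h : IsCoupling π μ ν)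
    {F G : Ed d × Ed d → Ed d} (hF : Measurable F) (hG : Measurable G)
    (hFm : π.map F = μ.1) (hGm : π.map G = ν.1) :
    IsCoupling (π.map fun p => (F p, G p)) μ ν := by
  constructor
  · rw [Measure.map_map measurable_fst (hF.prodMk hG)]; exact hFm
  · rw [Measure.map_map measurable_snd (hF.prodMk hG)]; exact hGm

lemma Wcost_map {π : Measure (Ed d × Ed d)} {F G : Ed d × Ed d → Ed d}
    (hF : Measurable F) (hG : Measurable G) :
    Wcost (π.map fun p => (F p, G p)) = ∫⁻ p, (‖F p - G p‖₊ : ℝ≥0∞) ^ 2 ∂π := by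
  rw [Wcost, lintegral_map meas_cost (hF.prodMk hG)]

lemma meas_diag : Measurable fun x : Ed d => (x, x) := measurable_id.prodMk measurable_id

lemma W2_self (μ : P2 d) : W2 μ μ = 0 := by
  have hc : IsCoupling (μ.1.map fun x => (x, x)) μ μ := by
    constructor <;>
    · rw [Measure.map_map (by measurability) meas_diag]
      exact Measure.map_id
  have hz : Wcost (μ.1.map fun x => (x, x)) = 0 := by
    rw [Wcost, lintegral_map meas_cost meas_diag]
    simp
  have : Winf μ μ = 0 := le_antisymm (hz ▸ Winf_le hc) (by simp)
  rw [W2_def, this]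
  simp

lemma coupling_swap {π : Measure (Ed d × Ed d)} {μ ν : P2 d} (h : IsCoupling π μ ν) :
    IsCoupling (π.map Prod.swap) ν μ := by
  constructor
  · rw [Measure.map_map measurable_fst measurable_swap]; exact h.2
  · rw [Measure.map_map measurable_snd measurable_swap]; exact h.1

lemma Wcost_swap (π : Measure (Ed d × Ed d)) : Wcost (π.map Prod.swap) = Wcost π := by
  rw [Wcost, lintegral_map meas_cost measurable_swap, Wcost]
  congr 1
  funext p
  rw [Prod.fst_swap, Prod.snd_swap, ← neg_sub p.1 p.2, nnnorm_neg]

lemma Winf_symm_le (μ ν : P2 d) : Winf ν μ ≤ Winf μ ν := by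
  refine le_iInf₂ fun π hπ => ?_
  exact (Winf_le (coupling_swap hπ)).trans_eq (Wcost_swap π)

lemma W2_symm (μ ν : P2 d) : W2 μ ν = W2 ν μ := by
  rw [W2_def, W2_def, le_antisymm (Winf_symm_le ν μ) (Winf_symm_le μ ν)]

end P2Aux
namespace P2Aux

open ProbabilityTheory

variable {d : ℕ}

lemma coupling_prob {π : Measure (Ed d × Ed d)} {μ ν : P2 d} (h : IsCoupling π μ ν) :
    IsProbabilityMeasure π := by
  haveI := prob μ
  have h1 : π.map Prod.fst Set.univ = μ.1 Set.univ := by rw [h.1]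
  rw [Measure.map_apply measurable_fst MeasurableSet.univ, Set.preimage_univ] at h1
  exact ⟨h1.trans measure_univ⟩

lemma sqrt_sq_add_sq_le {x t : ℝ} (hx : 0 ≤ x) (ht : 0 ≤ t) :
    Real.sqrt (x ^ 2 + t ^ 2) ≤ x + t := by
  have h : x ^ 2 + t ^ 2 ≤ (x + t) ^ 2 := by nlinarith
  calc Real.sqrt (x ^ 2 + t ^ 2) ≤ Real.sqrt ((x + t) ^ 2) := Real.sqrt_le_sqrt h
    _ = x + t := by rw [Real.sqrt_sq (by linarith)]

lemma W2_triangle (a b c : P2 d) : W2 a c ≤ W2 a b + W2 b c := by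
  refine le_of_forall_pos_le_add fun η hη => ?_
  obtain ⟨π₁, h1, hc1⟩ := exists_coupling_lt a b (τ := (η / 2) ^ 2) (by positivity)
  obtain ⟨π₂, h2, hc2⟩ := exists_coupling_lt b c (τ := (η / 2) ^ 2) (by positivity)
  haveI hp1 : IsProbabilityMeasure π₁ := coupling_prob h1
  haveI hp2 : IsProbabilityMeasure π₂ := coupling_prob h2
  haveI := prob b
  set ρ : Measure (Ed d × Ed d) := π₁.map Prod.swap with hρ
  haveI : IsProbabilityMeasure ρ := Measure.isProbabilityMeasure_map measurable_swap.aemeasurable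
  have hρfst : ρ.fst = b.1 := by
    rw [Measure.fst, hρ, Measure.map_map measurable_fst measurable_swap]
    exact h1.2
  have hρeq : b.1 ⊗ₘ ρ.condKernel = ρ := by rw [← hρfst]; exact ρ.disintegrate ρ.condKernel
  have hfst2 : π₂.fst = b.1 := h2.1
  have hπ₂eq : b.1 ⊗ₘ π₂.condKernel = π₂ := by
    rw [← hfst2]; exact π₂.disintegrate π₂.condKernel
  set κ₁ := ρ.condKernel with hκ₁
  set κ₂ := π₂.condKernel with hκ₂
  set β : Measure (Ed d × Ed d × Ed d) := b.1 ⊗ₘ (κ₁ ×ₖ κ₂) with hβdef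
  set γ : Measure (Ed d × Ed d) := β.map (fun p => p.2) with hγdef
  have hγ : IsCoupling γ a c := by
    constructor
    · rw [hγdef, Measure.map_map measurable_fst measurable_snd]
      ext s hs
      rw [Measure.map_apply (measurable_fst.comp measurable_snd) hs,
          Measure.compProd_apply ((measurable_fst.comp measurable_snd) hs)]
      have ha : a.1 s = ∫⁻ y, κ₁ y s ∂b.1 := by
        have h1' : a.1 s = ρ (Prod.snd ⁻¹' s) := by
          rw [hρ, Measure.map_apply measurable_swap (measurable_snd hs),
              ← h1.1, Measure.map_apply measurable_fst hs]
          exact congrArg π₁ (by ext p; simp)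
        rw [h1', ← hρeq, Measure.compProd_apply (measurable_snd hs)]
        rfl
      rw [ha]
      refine lintegral_congr fun y => ?_
      rw [Kernel.prod_apply]
      have hset : (Prod.mk y ⁻¹' ((Prod.fst ∘ Prod.snd) ⁻¹' s) : Set (Ed d × Ed d))
          = s ×ˢ Set.univ := by ext w; simp
      rw [hset, Measure.prod_prod, measure_univ, mul_one]
    · rw [hγdef, Measure.map_map measurable_snd measurable_snd]
      ext s hs
      rw [Measure.map_apply (measurable_snd.comp measurable_snd) hs,
          Measure.compProd_apply ((measurable_snd.comp measurable_snd) hs)]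
      have hc' : c.1 s = ∫⁻ y, κ₂ y s ∂b.1 := by
        rw [← h2.2, Measure.map_apply measurable_snd hs, ← hπ₂eq,
            Measure.compProd_apply (measurable_snd hs)]
        rfl
      rw [hc']
      refine lintegral_congr fun y => ?_
      rw [Kernel.prod_apply]
      have hset : (Prod.mk y ⁻¹' ((Prod.snd ∘ Prod.snd) ⁻¹' s) : Set (Ed d × Ed d))
          = Set.univ ×ˢ s := by ext w; simp
      rw [hset, Measure.prod_prod, measure_univ, one_mul]
  set f : Ed d × Ed d × Ed d → ℝ≥0∞ := fun p => (‖p.2.1 - p.1‖₊ : ℝ≥0∞) with hfdef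
  set g : Ed d × Ed d × Ed d → ℝ≥0∞ := fun p => (‖p.1 - p.2.2‖₊ : ℝ≥0∞) with hgdef
  have mf : Measurable f := (measurable_snd.fst.sub measurable_fst).nnnorm.coe_nnreal_ennreal
  have mg : Measurable g := (measurable_fst.sub measurable_snd.snd).nnnorm.coe_nnreal_ennreal
  have hI1 : ∫⁻ p, f p ^ 2 ∂β = Wcost π₁ := by
    rw [hβdef, Measure.lintegral_compProd (mf.pow_const 2)]
    have hstep : ∀ y, ∫⁻ w, f (y, w) ^ 2 ∂((κ₁ ×ₖ κ₂) y)
        = ∫⁻ x, (‖x - y‖₊ : ℝ≥0∞) ^ 2 ∂(κ₁ y) := by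
      intro y
      rw [Kernel.prod_apply]
      show ∫⁻ w : Ed d × Ed d, (‖w.1 - y‖₊ : ℝ≥0∞) ^ 2 ∂((κ₁ y).prod (κ₂ y)) = _
      rw [lintegral_prod _
        ((show Measurable fun w : Ed d × Ed d => (‖w.1 - y‖₊ : ℝ≥0∞) ^ 2 from
          (measurable_fst.sub measurable_const).nnnorm.coe_nnreal_ennreal.pow_const 2).aemeasurable)]
      simp
    rw [lintegral_congr hstep,
        show (∫⁻ y, ∫⁻ x, (‖x - y‖₊ : ℝ≥0∞) ^ 2 ∂(κ₁ y) ∂b.1)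
          = ∫⁻ q : Ed d × Ed d, (‖q.2 - q.1‖₊ : ℝ≥0∞) ^ 2 ∂(b.1 ⊗ₘ κ₁) from
        (Measure.lintegral_compProd
          ((measurable_snd.sub measurable_fst).nnnorm.coe_nnreal_ennreal.pow_const 2)).symm,
        hρeq, hρ,
        lintegral_map (show Measurable fun q : Ed d × Ed d => (‖q.2 - q.1‖₊ : ℝ≥0∞) ^ 2 from
          (measurable_snd.sub measurable_fst).nnnorm.coe_nnreal_ennreal.pow_const 2)
          measurable_swap]
    rfl
  have hI2 : ∫⁻ p, g p ^ 2 ∂β = Wcost π₂ := by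
    rw [hβdef, Measure.lintegral_compProd (mg.pow_const 2)]
    have hstep : ∀ y, ∫⁻ w, g (y, w) ^ 2 ∂((κ₁ ×ₖ κ₂) y)
        = ∫⁻ z, (‖y - z‖₊ : ℝ≥0∞) ^ 2 ∂(κ₂ y) := by
      intro y
      rw [Kernel.prod_apply]
      show ∫⁻ w : Ed d × Ed d, (‖y - w.2‖₊ : ℝ≥0∞) ^ 2 ∂((κ₁ y).prod (κ₂ y)) = _
      rw [lintegral_prod _
        ((show Measurable fun w : Ed d × Ed d => (‖y - w.2‖₊ : ℝ≥0∞) ^ 2 from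
          (measurable_const.sub measurable_snd).nnnorm.coe_nnreal_ennreal.pow_const 2).aemeasurable)]
      simp
    rw [lintegral_congr hstep,
        show (∫⁻ y, ∫⁻ z, (‖y - z‖₊ : ℝ≥0∞) ^ 2 ∂(κ₂ y) ∂b.1)
          = ∫⁻ q : Ed d × Ed d, (‖q.1 - q.2‖₊ : ℝ≥0∞) ^ 2 ∂(b.1 ⊗ₘ κ₂) from
        (Measure.lintegral_compProd
          ((measurable_fst.sub measurable_snd).nnnorm.coe_nnreal_ennreal.pow_const 2)).symm,
        hπ₂eq]
    rfl
  have hpt : ∀ p : Ed d × Ed d × Ed d, (‖p.2.1 - p.2.2‖₊ : ℝ≥0∞) ≤ f p + g p := by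
    intro p
    have h : ‖p.2.1 - p.2.2‖₊ ≤ ‖p.2.1 - p.1‖₊ + ‖p.1 - p.2.2‖₊ := by
      calc ‖p.2.1 - p.2.2‖₊ = ‖(p.2.1 - p.1) + (p.1 - p.2.2)‖₊ := by rw [sub_add_sub_cancel]
        _ ≤ _ := nnnorm_add_le _ _
    calc (‖p.2.1 - p.2.2‖₊ : ℝ≥0∞) ≤ ((‖p.2.1 - p.1‖₊ + ‖p.1 - p.2.2‖₊ : ℝ≥0) : ℝ≥0∞) :=
          ENNReal.coe_le_coe.2 h
      _ = f p + g p := by rw [ENNReal.coe_add]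
  have hγc : Wcost γ ≤ ∫⁻ p, (f p + g p) ^ 2 ∂β := by
    rw [hγdef, Wcost, lintegral_map meas_cost measurable_snd]
    exact lintegral_mono fun p => pow_le_pow_left' (hpt p) 2
  have hconv : ∀ (h : Ed d × Ed d × Ed d → ℝ≥0∞) (p : Ed d × Ed d × Ed d),
      h p ^ (2 : ℝ) = h p ^ (2 : ℕ) := by
    intro h p
    rw [← ENNReal.rpow_natCast]
    norm_num
  have hmink := ENNReal.lintegral_Lp_add_le (μ := β) (p := 2)
    mf.aemeasurable mg.aemeasurable one_le_two
  have key : (Wcost γ) ^ (1/2 : ℝ) ≤ (Wcost π₁) ^ (1/2 : ℝ) + (Wcost π₂) ^ (1/2 : ℝ) := by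
    calc (Wcost γ) ^ (1/2 : ℝ)
        ≤ (∫⁻ p, (f p + g p) ^ (2:ℝ) ∂β) ^ (1/2 : ℝ) := by
          refine ENNReal.rpow_le_rpow ?_ (by norm_num)
          simpa only [hconv (fun p => f p + g p)] using hγc
      _ ≤ (∫⁻ p, f p ^ (2:ℝ) ∂β) ^ (1/2 : ℝ) + (∫⁻ p, g p ^ (2:ℝ) ∂β) ^ (1/2 : ℝ) := hmink
      _ = (Wcost π₁) ^ (1/2 : ℝ) + (Wcost π₂) ^ (1/2 : ℝ) := by
          simp only [hconv f, hconv g]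
          rw [hI1, hI2]
  have h1fin : Wcost π₁ ≠ ⊤ := (Wcost_lt_top h1).ne
  have h2fin : Wcost π₂ ≠ ⊤ := (Wcost_lt_top h2).ne
  have hrfin : (Wcost π₁) ^ (1/2 : ℝ) + (Wcost π₂) ^ (1/2 : ℝ) ≠ ⊤ :=
    ENNReal.add_ne_top.2 ⟨ENNReal.rpow_ne_top_of_nonneg (by norm_num) h1fin,
      ENNReal.rpow_ne_top_of_nonneg (by norm_num) h2fin⟩
  have hkeyR := ENNReal.toReal_mono hrfin key
  rw [ENNReal.toReal_add (ENNReal.rpow_ne_top_of_nonneg (by norm_num) h1fin)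
      (ENNReal.rpow_ne_top_of_nonneg (by norm_num) h2fin),
    ← ENNReal.toReal_rpow, ← ENNReal.toReal_rpow, ← ENNReal.toReal_rpow,
    ← Real.sqrt_eq_rpow, ← Real.sqrt_eq_rpow, ← Real.sqrt_eq_rpow] at hkeyR
  have hW : W2 a c ≤ Real.sqrt (Wcost γ).toReal := W2_le_of_coupling hγ
  have hb1 : Real.sqrt (Wcost π₁).toReal ≤ W2 a b + η / 2 := by
    calc Real.sqrt (Wcost π₁).toReal ≤ Real.sqrt ((W2 a b) ^ 2 + (η/2) ^ 2) :=
          Real.sqrt_le_sqrt hc1.le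
      _ ≤ W2 a b + η / 2 := sqrt_sq_add_sq_le (W2_nonneg a b) (by linarith)
  have hb2 : Real.sqrt (Wcost π₂).toReal ≤ W2 b c + η / 2 := by
    calc Real.sqrt (Wcost π₂).toReal ≤ Real.sqrt ((W2 b c) ^ 2 + (η/2) ^ 2) :=
          Real.sqrt_le_sqrt hc2.le
      _ ≤ W2 b c + η / 2 := sqrt_sq_add_sq_le (W2_nonneg b c) (by linarith)
  linarith

end P2Aux
namespace P2Aux

variable {d : ℕ}

noncomputable def itp (t : ℝ) (p : Ed d × Ed d) : Ed d := p.1 + t • (p.2 - p.1)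

lemma itp_meas (t : ℝ) : Measurable (itp (d := d) t) :=
  measurable_fst.add ((measurable_snd.sub measurable_fst).const_smul t)

lemma sq_coe_add_le (a b : ℝ≥0) :
    (((a + b : ℝ≥0)) : ℝ≥0∞) ^ 2 ≤ 2 * ((a : ℝ≥0∞) ^ 2 + (b : ℝ≥0∞) ^ 2) := by
  have h : ((a + b) ^ 2 : ℝ≥0) ≤ 2 * (a ^ 2 + b ^ 2) := by
    rw [← NNReal.coe_le_coe]
    push_cast
    nlinarith [a.coe_nonneg, b.coe_nonneg, sq_nonneg ((a : ℝ) - (b : ℝ))]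
  calc (((a + b : ℝ≥0)) : ℝ≥0∞) ^ 2 = (((a + b) ^ 2 : ℝ≥0) : ℝ≥0∞) := by push_cast; ring
    _ ≤ ((2 * (a ^ 2 + b ^ 2) : ℝ≥0) : ℝ≥0∞) := ENNReal.coe_le_coe.2 h
    _ = 2 * ((a : ℝ≥0∞) ^ 2 + (b : ℝ≥0∞) ^ 2) := by push_cast; ring

lemma interp_P2 {π : Measure (Ed d × Ed d)} {μ ν : P2 d} (h : IsCoupling π μ ν)
    {t : ℝ} (ht1 : |t| ≤ 1) : IsP2Meas (π.map (itp t)) := by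
  haveI := coupling_prob h
  constructor
  · exact Measure.isProbabilityMeasure_map (itp_meas t).aemeasurable
  · rw [lintegral_map (measurable_nnnorm.coe_nnreal_ennreal.pow_const 2) (itp_meas t)]
    have hb : ∀ p : Ed d × Ed d, (‖itp t p‖₊ : ℝ≥0∞) ^ 2
        ≤ 2 * ((‖p.1‖₊ : ℝ≥0∞) ^ 2 + (‖p.1 - p.2‖₊ : ℝ≥0∞) ^ 2) := by
      intro p
      refine le_trans ?_ (sq_coe_add_le ‖p.1‖₊ ‖p.1 - p.2‖₊)
      refine pow_le_pow_left' (ENNReal.coe_le_coe.2 ?_) 2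
      calc ‖itp t p‖₊ ≤ ‖p.1‖₊ + ‖t • (p.2 - p.1)‖₊ := nnnorm_add_le _ _
        _ ≤ ‖p.1‖₊ + ‖p.1 - p.2‖₊ := by
            gcongr
            rw [nnnorm_smul]
            have h1 : ‖t‖₊ ≤ 1 := by
              rw [← NNReal.coe_le_coe]
              simpa [Real.norm_eq_abs] using ht1
            calc ‖t‖₊ * ‖p.2 - p.1‖₊ ≤ 1 * ‖p.2 - p.1‖₊ := by gcongr
              _ = ‖p.1 - p.2‖₊ := by rw [one_mul, ← neg_sub p.1 p.2, nnnorm_neg]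
    calc ∫⁻ x, (‖itp t x‖₊ : ℝ≥0∞) ^ 2 ∂π
        ≤ ∫⁻ p, 2 * ((‖p.1‖₊ : ℝ≥0∞) ^ 2 + (‖p.1 - p.2‖₊ : ℝ≥0∞) ^ 2) ∂π :=
          lintegral_mono hb
      _ = 2 * ((∫⁻ p, (‖p.1‖₊ : ℝ≥0∞) ^ 2 ∂π) + Wcost π) := by
          rw [lintegral_const_mul _ (show Measurable fun p : Ed d × Ed d =>
              (‖p.1‖₊ : ℝ≥0∞) ^ 2 + (‖p.1 - p.2‖₊ : ℝ≥0∞) ^ 2 from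
            (measurable_fst.nnnorm.coe_nnreal_ennreal.pow_const 2).add meas_cost), lintegral_add_left (measurable_fst.nnnorm.coe_nnreal_ennreal.pow_const 2)]
          rfl
      _ < ⊤ := by
          rw [lintegral_fst h.1 (measurable_nnnorm.coe_nnreal_ennreal.pow_const 2)]
          exact ENNReal.mul_lt_top (by norm_num)
            (ENNReal.add_lt_top.mpr ⟨mom_lt_top μ, Wcost_lt_top h⟩)

lemma W2_le_itp {π : Measure (Ed d × Ed d)} {s u : ℝ} (A B : P2 d)
    (hA : A.1 = π.map (itp s)) (hB : B.1 = π.map (itp u)) :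
    W2 A B ≤ |u - s| * Real.sqrt (Wcost π).toReal := by
  have hcpl : IsCoupling (π.map fun p => (itp s p, itp u p)) A B := by
    constructor
    · rw [Measure.map_map measurable_fst ((itp_meas s).prodMk (itp_meas u))]; exact hA.symm
    · rw [Measure.map_map measurable_snd ((itp_meas s).prodMk (itp_meas u))]; exact hB.symm
  have hcost : Wcost (π.map fun p => (itp s p, itp u p))
      = (‖u - s‖₊ : ℝ≥0∞) ^ 2 * Wcost π := by
    rw [Wcost_map (itp_meas s) (itp_meas u), Wcost, ← lintegral_const_mul _ meas_cost]
    refine lintegral_congr fun p => ?_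
    have hd : itp s p - itp u p = (u - s) • (p.1 - p.2) := by
      simp only [itp]
      module
    rw [hd, nnnorm_smul, ENNReal.coe_mul, mul_pow]
  refine (W2_le_of_coupling hcpl).trans ?_
  rw [hcost, ENNReal.toReal_mul, Real.sqrt_mul (by positivity)]
  have : ((‖u - s‖₊ : ℝ≥0∞) ^ 2).toReal = |u - s| ^ 2 := by
    rw [ENNReal.toReal_pow, ENNReal.coe_toReal, coe_nnnorm, Real.norm_eq_abs]
  rw [this, Real.sqrt_sq (abs_nonneg _)]

lemma phi_bdd {mhat : P2 d} {φ : P2 d → ℝ} (hφ : UCmem mhat φ) {M : ℝ} (hM : 0 < M) :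
    ∃ C : ℝ, 0 ≤ C ∧ ∀ μ : P2 d, W2 mhat μ ≤ M → φ μ ≤ C := by
  obtain ⟨δ, hδ, hUC⟩ := hφ.unif_cont (M + 1) (by linarith) 1 one_pos
  obtain ⟨N, hNgt⟩ := exists_nat_gt ((M + 1) / δ)
  have hN0 : 0 < (N : ℝ) := lt_of_le_of_lt (div_nonneg (by linarith) hδ.le) hNgt
  refine ⟨N, Nat.cast_nonneg N, fun μ hμ => ?_⟩
  obtain ⟨π, hπ, hπc⟩ := exists_coupling_lt mhat μ (τ := 2 * M + 1) (by linarith)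
  set T := Real.sqrt (Wcost π).toReal with hTdef
  have hT0 : 0 ≤ T := Real.sqrt_nonneg _
  have hTle : T ≤ M + 1 := by
    rw [hTdef]
    calc Real.sqrt (Wcost π).toReal ≤ Real.sqrt ((M + 1) ^ 2) := by
          apply Real.sqrt_le_sqrt
          nlinarith [W2_nonneg mhat μ]
      _ = M + 1 := Real.sqrt_sq (by linarith)
  set t : ℕ → ℝ := fun i => min ((i : ℝ) / N) 1 with htdef
  have ht0 : ∀ i, 0 ≤ t i := fun i => le_min (by positivity) zero_le_one
  have ht1 : ∀ i, |t i| ≤ 1 := fun i => by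
    rw [abs_of_nonneg (ht0 i)]; exact min_le_right _ _
  set g : ℕ → P2 d := fun i => ⟨π.map (itp (t i)), interp_P2 hπ (ht1 i)⟩ with hgdef
  have hg0 : g 0 = mhat := by
    apply Subtype.ext
    show π.map (itp (t 0)) = mhat.1
    have ht00 : t 0 = 0 := by simp [htdef]
    rw [ht00, show itp (d := d) 0 = Prod.fst from funext fun p => by simp [itp], hπ.1]
  have hgN : g N = μ := by
    apply Subtype.ext
    show π.map (itp (t N)) = μ.1
    have htN : t N = 1 := by
      simp [htdef, div_self hN0.ne']
    rw [htN, show itp (d := d) 1 = Prod.snd from funext fun p => by simp [itp], hπ.2]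
  have hrad : ∀ i, W2 mhat (g i) ≤ M + 1 := by
    intro i
    have h0 : mhat.1 = π.map (itp 0) := by
      rw [show itp (d := d) 0 = Prod.fst from funext fun p => by simp [itp], hπ.1]
    calc W2 mhat (g i) ≤ |t i - 0| * T := W2_le_itp mhat (g i) h0 rfl
      _ ≤ 1 * (M + 1) := by
          rw [sub_zero]
          exact mul_le_mul (ht1 i) hTle hT0 zero_le_one
      _ = M + 1 := one_mul _
  have hmono : ∀ i : ℕ, t i ≤ t (i + 1) := by
    intro i
    refine min_le_min ((div_le_div_iff_of_pos_right hN0).2 (by push_cast; linarith)) le_rfl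
  have hstep : ∀ i : ℕ, t (i + 1) - t i ≤ 1 / N := by
    intro i
    have h2 : t (i + 1) ≤ t i + 1 / N := by
      have e1 : ((i + 1 : ℕ) : ℝ) / N = (i : ℝ) / N + 1 / N := by push_cast; ring
      calc t (i + 1) = min (((i + 1 : ℕ) : ℝ) / N) 1 := rfl
        _ = min ((i : ℝ) / N + 1 / N) 1 := by rw [e1]
        _ ≤ min ((i : ℝ) / N + 1 / N) (1 + 1 / N) := by
            apply min_le_min le_rfl
            have : 0 ≤ 1 / (N : ℝ) := by positivity
            linarith
        _ = min ((i : ℝ) / N) 1 + 1 / N := by rw [← min_add_add_right]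
        _ = t i + 1 / N := rfl
    linarith
  have hφstep : ∀ i : ℕ, φ (g (i + 1)) ≤ φ (g i) + 1 := by
    intro i
    have hd : W2 (g i) (g (i + 1)) ≤ δ := by
      calc W2 (g i) (g (i + 1)) ≤ |t (i + 1) - t i| * T := W2_le_itp (g i) (g (i + 1)) rfl rfl
        _ ≤ (1 / N) * (M + 1) := by
            apply mul_le_mul _ hTle hT0 (by positivity)
            rw [abs_of_nonneg (by linarith [hmono i])]
            exact hstep i
        _ ≤ δ := by
            rw [div_mul_eq_mul_div, div_le_iff₀ hN0]
            rw [div_lt_iff₀ hδ] at hNgt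
            nlinarith
    have := hUC (g i) (g (i + 1)) (hrad i) (hrad (i + 1)) hd
    have h1 := abs_le.1 this
    linarith [h1.2]
  have hind : ∀ i : ℕ, φ (g i) ≤ i := by
    intro i
    induction i with
    | zero => simp [hg0, hφ.zero_at]
    | succ n ih =>
        have := hφstep n
        push_cast
        linarith
  have := hind N
  rwa [hgN] at this

end P2Aux
namespace P2Aux

lemma quad_bound {W b A : ℝ} (hW : 0 ≤ W) (hb : 0 ≤ b) (h : (W + b) ^ 2 ≤ A) :
    W ≤ Real.sqrt A - b := by
  have h2 : W + b ≤ Real.sqrt A := by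
    calc W + b = Real.sqrt ((W + b) ^ 2) := (Real.sqrt_sq (by linarith)).symm
      _ ≤ Real.sqrt A := Real.sqrt_le_sqrt h
  linarith

lemma sqrt_sq_mul {κ : ℝ} (hκ : 0 ≤ κ) (A : ℝ) :
    Real.sqrt (κ ^ 2 * A) = κ * Real.sqrt A := by
  rw [Real.sqrt_mul (sq_nonneg κ), Real.sqrt_sq hκ]

end P2Aux

/-- further distance estimates for Ekeland points. -/
theorem statement4 {d : ℕ} (mhat : P2 d) (R : ℝ) (hR : 0 < R)
    (φ : P2 d → ℝ) (hφ : UCmem mhat φ) (κ ε : ℝ) (hκ : κ ∈ Ioc (0 : ℝ) 1)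
    (hε : ε ∈ Ioc (0 : ℝ) 1)
    (m : P2 d) (hm : W2 mhat m ≤ R) (μb : P2 d) (hek : EkelandPt φ κ ε m μb) :
    W2 m μb ≤ Kke mhat φ κ ε R ∧ W2 mhat μb ≤ Me mhat φ ε R := by
  
  obtain ⟨hκ0, hκ1⟩ := hκ
  obtain ⟨hε0, hε1⟩ := hε
  obtain ⟨C, hC0, hC⟩ := P2Aux.phi_bdd hφ hR
  have hball : BddAbove (φ '' ballW mhat R) := ⟨C, by rintro x ⟨ν, hν, rfl⟩; exact hC ν hν⟩
  have hmem_mhat : mhat ∈ ballW mhat R := by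
    show W2 mhat mhat ≤ R
    rw [P2Aux.W2_self]
    exact hR.le
  set S := Sfun mhat φ R with hSdef
  have hSm : φ m ≤ S := le_csSup hball ⟨m, hm, rfl⟩
  have hS0 : 0 ≤ S := by
    have := le_csSup hball ⟨mhat, hmem_mhat, rfl⟩
    rwa [hφ.zero_at] at this
  set W := W2 m μb with hWdef
  have hW0 : 0 ≤ W := P2Aux.W2_nonneg m μb
  have h1 : 1 / (2 * κ ^ 2) * W ^ 2 + ε * W ≤ φ m - φ μb := by
    have hsym : W2 μb m = W := by rw [hWdef, P2Aux.W2_symm]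
    have := hek.1
    rw [hsym] at this
    linarith
  have hκ2 : (0 : ℝ) < κ ^ 2 := by positivity
  have hmul : ∀ X : ℝ, 1 / (2 * κ ^ 2) * W ^ 2 + ε * W ≤ X →
      (W + ε * κ ^ 2) ^ 2 ≤ κ ^ 2 * (ε ^ 2 * κ ^ 2 + 2 * X) := by
    intro X hX
    have h3 := mul_le_mul_of_nonneg_left hX (by positivity : (0 : ℝ) ≤ 2 * κ ^ 2)
    have h4 : 2 * κ ^ 2 * (1 / (2 * κ ^ 2) * W ^ 2 + ε * W) = W ^ 2 + 2 * ε * κ ^ 2 * W := by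
      field_simp
    rw [h4] at h3
    nlinarith
  have hMkeW : W ≤ Mke mhat φ κ ε R := by
    have hX : 1 / (2 * κ ^ 2) * W ^ 2 + ε * W ≤ S := by linarith [hφ.nonneg μb]
    have hsq := hmul S hX
    have hqb := P2Aux.quad_bound hW0 (by positivity) hsq
    rw [P2Aux.sqrt_sq_mul hκ0.le] at hqb
    show W ≤ κ * Real.sqrt (2 * Sfun mhat φ R + ε ^ 2 * κ ^ 2) - ε * κ ^ 2
    rw [← hSdef, show 2 * S + ε ^ 2 * κ ^ 2 = ε ^ 2 * κ ^ 2 + 2 * S from by ring]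
    exact hqb
  have hMkele : Mke mhat φ κ ε R ≤ Real.sqrt (2 * S + ε ^ 2) := by
    have hκ2le : κ ^ 2 ≤ 1 := by nlinarith
    have hb : κ ^ 2 * (2 * S + ε ^ 2 * κ ^ 2) ≤ 2 * S + ε ^ 2 := by
      have ha1 : 2 * S * κ ^ 2 ≤ 2 * S := by nlinarith
      have hk4 : κ ^ 2 * κ ^ 2 ≤ 1 := by nlinarith [sq_nonneg κ]
      have ha2 : ε ^ 2 * κ ^ 2 * κ ^ 2 ≤ ε ^ 2 := by
        nlinarith [mul_le_mul_of_nonneg_left hk4 (sq_nonneg ε)]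
      nlinarith
    have hmono := Real.sqrt_le_sqrt hb
    rw [P2Aux.sqrt_sq_mul hκ0.le] at hmono
    show κ * Real.sqrt (2 * Sfun mhat φ R + ε ^ 2 * κ ^ 2) - ε * κ ^ 2 ≤ _
    rw [← hSdef]
    nlinarith [Real.sqrt_nonneg (2 * S + ε ^ 2 * κ ^ 2)]
  have hpart2 : W2 mhat μb ≤ Me mhat φ ε R := by
    have htri := P2Aux.W2_triangle mhat m μb
    show W2 mhat μb ≤ R + Real.sqrt (2 * Sfun mhat φ R + ε ^ 2)
    rw [← hSdef]
    linarith
  have hMe0 : 0 < Me mhat φ ε R := by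
    show 0 < R + Real.sqrt (2 * Sfun mhat φ R + ε ^ 2)
    have := Real.sqrt_nonneg (2 * Sfun mhat φ R + ε ^ 2)
    linarith
  obtain ⟨C', hC'0, hC'⟩ := P2Aux.phi_bdd hφ hMe0
  have hbddω : BddAbove {c : ℝ | ∃ ν₁ ν₂ : P2 d, W2 ν₁ ν₂ ≤ Mke mhat φ κ ε R ∧
      W2 mhat ν₁ ≤ Me mhat φ ε R ∧ W2 mhat ν₂ ≤ Me mhat φ ε R ∧ c = |φ ν₁ - φ ν₂|} := by
    refine ⟨C', ?_⟩
    rintro c ⟨ν₁, ν₂, h₁, h₂, h₃, rfl⟩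
    exact abs_le.2 ⟨by linarith [hφ.nonneg ν₁, hC' ν₂ h₃], by linarith [hφ.nonneg ν₂, hC' ν₁ h₂]⟩
  have hMe_m : W2 mhat m ≤ Me mhat φ ε R := by
    show W2 mhat m ≤ R + Real.sqrt (2 * Sfun mhat φ R + ε ^ 2)
    have := Real.sqrt_nonneg (2 * Sfun mhat φ R + ε ^ 2)
    linarith
  have hω : φ m - φ μb ≤ omegaR mhat φ ε R (Mke mhat φ κ ε R) :=
    le_trans (le_abs_self _) (le_csSup hbddω ⟨m, μb, hMkeW, hMe_m, hpart2, rfl⟩)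
  have hsq := hmul _ (le_trans h1 hω)
  have hfin := P2Aux.quad_bound hW0 (by positivity : (0:ℝ) ≤ ε * κ ^ 2) hsq
  rw [P2Aux.sqrt_sq_mul hκ0.le] at hfin
  refine ⟨?_, hpart2⟩
  show W ≤ ε * κ ^ 2 + κ * Real.sqrt (ε ^ 2 * κ ^ 2 + 2 * omegaR mhat φ ε R (Mke mhat φ κ ε R))
  nlinarith [Real.sqrt_nonneg (ε ^ 2 * κ ^ 2 + 2 * omegaR mhat φ ε R (Mke mhat φ κ ε R))]
end
end

section
/- Let m̂ ∈ P₂(ℝ^d), R > 0, φ ∈ UC_m̂, κ ∈ (0,1], ε > 0, m ∈ B_R(m̂), and let μ̄ be an Ekeland point for (φ,κ,ε,m). Then φ(μ̄) + (1/(2κ²))W₂²(m,μ̄) ≤ φ_κ(m) + N_κ^ε(R,m), where N_κ^ε(R,m) = εκ√(2φ_κ(m)) + ε·M_κ^ε(R). -/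
open MeasureTheory Set Filter Topology
open scoped ENNReal NNReal InnerProductSpace

noncomputable section

namespace S5
open ProbabilityTheory

variable {d : ℕ}

/-- second moment -/
def M2 (μ : P2 d) : ℝ≥0∞ := ∫⁻ x, (‖x‖₊ : ℝ≥0∞) ^ 2 ∂μ.1

lemma M2_lt_top (μ : P2 d) : M2 μ < ⊤ := μ.2.2

instance instProb (μ : P2 d) : IsProbabilityMeasure μ.1 := μ.2.1

def W2i (μ ν : P2 d) : ℝ≥0∞ :=
  ⨅ π ∈ {π : Measure (Ed d × Ed d) | IsCoupling π μ ν}, Wcost π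

lemma W2_eq (μ ν : P2 d) : W2 μ ν = Real.sqrt (W2i μ ν).toReal := rfl

lemma W2_nonneg (μ ν : P2 d) : 0 ≤ W2 μ ν := Real.sqrt_nonneg _

lemma isProb_of_coupling {π : Measure (Ed d × Ed d)} {μ ν : P2 d}
    (h : IsCoupling π μ ν) : IsProbabilityMeasure π := by
  constructor
  have h1 : π.map Prod.fst Set.univ = 1 := by rw [h.1]; exact measure_univ
  rwa [Measure.map_apply measurable_fst MeasurableSet.univ, Set.preimage_univ] at h1

lemma sq_add_le (a b : ℝ≥0∞) : (a + b) ^ 2 ≤ 4 * a ^ 2 + 4 * b ^ 2 := by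
  rcases le_total a b with h | h
  · calc (a + b) ^ 2 ≤ (b + b) ^ 2 := by gcongr
      _ = 4 * b ^ 2 := by ring
      _ ≤ 4 * a ^ 2 + 4 * b ^ 2 := le_add_self
  · calc (a + b) ^ 2 ≤ (a + a) ^ 2 := by gcongr
      _ = 4 * a ^ 2 := by ring
      _ ≤ 4 * a ^ 2 + 4 * b ^ 2 := le_self_add

lemma wcost_lintegral {π : Measure (Ed d × Ed d)} :
    Wcost π = ∫⁻ p, (‖p.1 - p.2‖₊ : ℝ≥0∞) ^ 2 ∂π := rfl

lemma prod_coupling (μ ν : P2 d) : IsCoupling (μ.1.prod ν.1) μ ν := by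
  constructor
  · have : (μ.1.prod ν.1).fst = μ.1 := Measure.fst_prod
    simpa [Measure.fst] using this
  · have : (μ.1.prod ν.1).snd = ν.1 := Measure.snd_prod
    simpa [Measure.snd] using this

lemma wcost_prod_lt_top (μ ν : P2 d) : Wcost (μ.1.prod ν.1) < ⊤ := by
  have hb : ∀ p : Ed d × Ed d, (‖p.1 - p.2‖₊ : ℝ≥0∞) ^ 2
      ≤ 4 * (‖p.1‖₊ : ℝ≥0∞) ^ 2 + 4 * (‖p.2‖₊ : ℝ≥0∞) ^ 2 := by
    intro p
    refine le_trans ?_ (sq_add_le _ _)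
    have h1 : (‖p.1 - p.2‖₊ : ℝ≥0∞) ≤ (‖p.1‖₊ : ℝ≥0∞) + (‖p.2‖₊ : ℝ≥0∞) := by
      exact_mod_cast nnnorm_sub_le _ _
    gcongr
  have hm1 : ∫⁻ p : Ed d × Ed d, (‖p.1‖₊ : ℝ≥0∞) ^ 2 ∂(μ.1.prod ν.1) = M2 μ := by
    have h := lintegral_map (μ := μ.1.prod ν.1) (f := fun x : Ed d => (‖x‖₊ : ℝ≥0∞) ^ 2)
      (g := Prod.fst) (by fun_prop) measurable_fst
    rw [(prod_coupling μ ν).1] at h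
    exact h.symm
  have hm2 : ∫⁻ p : Ed d × Ed d, (‖p.2‖₊ : ℝ≥0∞) ^ 2 ∂(μ.1.prod ν.1) = M2 ν := by
    have h := lintegral_map (μ := μ.1.prod ν.1) (f := fun x : Ed d => (‖x‖₊ : ℝ≥0∞) ^ 2)
      (g := Prod.snd) (by fun_prop) measurable_snd
    rw [(prod_coupling μ ν).2] at h
    exact h.symm
  calc Wcost (μ.1.prod ν.1)
      ≤ ∫⁻ p, (4 * (‖p.1‖₊ : ℝ≥0∞) ^ 2 + 4 * (‖p.2‖₊ : ℝ≥0∞) ^ 2) ∂(μ.1.prod ν.1) :=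
        lintegral_mono hb
    _ = 4 * M2 μ + 4 * M2 ν := by
        rw [lintegral_add_left (by fun_prop), lintegral_const_mul _ (by fun_prop),
          lintegral_const_mul _ (by fun_prop), hm1, hm2]
    _ < ⊤ := by
        have h1 := M2_lt_top μ; have h2 := M2_lt_top ν
        refine ENNReal.add_lt_top.2 ⟨?_, ?_⟩ <;>
          exact ENNReal.mul_lt_top (by simp) (by assumption)

lemma W2i_le {π : Measure (Ed d × Ed d)} {μ ν : P2 d} (h : IsCoupling π μ ν) :
    W2i μ ν ≤ Wcost π := by
  rw [W2i]
  exact iInf₂_le π h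

lemma W2i_lt_top (μ ν : P2 d) : W2i μ ν < ⊤ :=
  lt_of_le_of_lt (W2i_le (prod_coupling μ ν)) (wcost_prod_lt_top μ ν)

lemma W2_le_of_coupling {π : Measure (Ed d × Ed d)} {μ ν : P2 d} (h : IsCoupling π μ ν)
    {C : ℝ≥0∞} (hC : C ≠ ⊤) (hc : Wcost π ≤ C) :
    W2 μ ν ≤ Real.sqrt C.toReal := by
  rw [W2_eq]
  exact Real.sqrt_le_sqrt (ENNReal.toReal_mono hC ((W2i_le h).trans hc))

lemma W2_sq (μ ν : P2 d) : W2 μ ν ^ 2 = (W2i μ ν).toReal :=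
  Real.sq_sqrt ENNReal.toReal_nonneg

lemma exists_coupling_lt (μ ν : P2 d) {a : ℝ≥0∞} (ha : W2i μ ν < a) :
    ∃ π : Measure (Ed d × Ed d), IsCoupling π μ ν ∧ Wcost π < a := by
  have := ha
  rw [W2i, iInf_lt_iff] at this
  obtain ⟨π, hπ⟩ := this
  rw [iInf_lt_iff] at hπ
  obtain ⟨hc, hlt⟩ := hπ
  exact ⟨π, hc, hlt⟩

/-- self distance is zero -/
lemma W2_self (μ : P2 d) : W2 μ μ = 0 := by
  have hcoup : IsCoupling (μ.1.map (fun x => (x, x))) μ μ := by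
    constructor <;>
    · rw [Measure.map_map (by fun_prop) (by fun_prop)]
      simp [Function.comp_def]
  have hcost : Wcost (μ.1.map (fun x => (x, x))) = 0 := by
    rw [wcost_lintegral, lintegral_map (by fun_prop) (by fun_prop)]
    simp
  have : W2i μ μ = 0 := le_antisymm (by rw [← hcost]; exact W2i_le hcoup) zero_le
  rw [W2_eq, this]; simp

/-- symmetry -/
lemma W2_symm (μ ν : P2 d) : W2 μ ν = W2 ν μ := by
  have key : ∀ α β : P2 d, W2i α β ≤ W2i β α := by
    intro α β
    refine le_iInf₂ ?_
    intro π hπ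
    have hc : IsCoupling (π.map Prod.swap) α β := by
      constructor
      · rw [Measure.map_map measurable_fst measurable_swap]
        simpa [Function.comp_def] using hπ.2
      · rw [Measure.map_map measurable_snd measurable_swap]
        simpa [Function.comp_def] using hπ.1
    refine (W2i_le hc).trans ?_
    rw [wcost_lintegral, wcost_lintegral, lintegral_map (by fun_prop) (by fun_prop)]
    simp only [Prod.fst_swap, Prod.snd_swap]
    refine le_of_eq (lintegral_congr fun p => ?_)
    rw [← nnnorm_neg]; simp
  rw [W2_eq, W2_eq, le_antisymm (key μ ν) (key ν μ)]

end S5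
namespace S5
open ProbabilityTheory
variable {d : ℕ}

lemma glue {π₁ π₂ : Measure (Ed d × Ed d)} {μ ν ρ : P2 d}
    (h1 : IsCoupling π₁ μ ν) (h2 : IsCoupling π₂ ν ρ) :
    ∃ π₃ : Measure (Ed d × Ed d), IsCoupling π₃ μ ρ ∧
      (Wcost π₃) ^ (1/2 : ℝ) ≤ (Wcost π₁) ^ (1/2 : ℝ) + (Wcost π₂) ^ (1/2 : ℝ) := by
  have hp1 : IsProbabilityMeasure π₁ := isProb_of_coupling h1
  have hp2 : IsProbabilityMeasure π₂ := isProb_of_coupling h2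
  set K := π₂.condKernel with hK
  have hfst : π₂.fst = ν.1 := h2.1
  have hdis : Measure.compProd ν.1 K = π₂ := by
    rw [← hfst, hK]; exact π₂.disintegrate π₂.condKernel
  set K' := K.comap (Prod.snd : Ed d × Ed d → Ed d) measurable_snd with hK'
  set β := Measure.compProd π₁ K' with hβ
  have hK'app : ∀ a : Ed d × Ed d, K' a = K a.2 := fun a => rfl
  -- second-third marginal of β is π₂
  have hβ2 : β.map (fun p : (Ed d × Ed d) × Ed d => (p.1.2, p.2)) = π₂ := by
    ext s hs
    rw [Measure.map_apply (by fun_prop) hs, hβ,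
      Measure.compProd_apply ((by fun_prop : Measurable fun p : (Ed d × Ed d) × Ed d => (p.1.2, p.2)) hs)]
    have : ∀ a : Ed d × Ed d, K' a (Prod.mk a ⁻¹'
        ((fun p : (Ed d × Ed d) × Ed d => (p.1.2, p.2)) ⁻¹' s)) = K a.2 (Prod.mk a.2 ⁻¹' s) := by
      intro a; rfl
    simp_rw [this]
    rw [← lintegral_map (Kernel.measurable_kernel_prodMk_left hs) measurable_snd, h1.2,
      ← Measure.compProd_apply hs, hdis]
  -- first marginal of β is π₁
  have hβ1 : β.map Prod.fst = π₁ := by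
    rw [hβ]; exact Measure.fst_compProd π₁ K'
  refine ⟨β.map (fun p => (p.1.1, p.2)), ⟨?_, ?_⟩, ?_⟩
  · rw [Measure.map_map measurable_fst (by fun_prop)]
    have : (Prod.fst ∘ fun p : (Ed d × Ed d) × Ed d => (p.1.1, p.2))
        = Prod.fst ∘ (Prod.fst : (Ed d × Ed d) × Ed d → Ed d × Ed d) := rfl
    rw [this, ← Measure.map_map measurable_fst measurable_fst, hβ1, h1.1]
  · rw [Measure.map_map measurable_snd (by fun_prop)]
    have : (Prod.snd ∘ fun p : (Ed d × Ed d) × Ed d => (p.1.1, p.2))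
        = Prod.snd ∘ (fun p : (Ed d × Ed d) × Ed d => (p.1.2, p.2)) := rfl
    rw [this, ← Measure.map_map measurable_snd (by fun_prop), hβ2, h2.2]
  · -- cost bound via Minkowski
    set f : (Ed d × Ed d) × Ed d → ℝ≥0∞ := fun p => (‖p.1.1 - p.1.2‖₊ : ℝ≥0∞) with hf
    set g : (Ed d × Ed d) × Ed d → ℝ≥0∞ := fun p => (‖p.1.2 - p.2‖₊ : ℝ≥0∞) with hg
    have hcost3 : Wcost (β.map (fun p => (p.1.1, p.2)))
        = ∫⁻ p, (‖p.1.1 - p.2‖₊ : ℝ≥0∞) ^ 2 ∂β := by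
      rw [wcost_lintegral, lintegral_map (by fun_prop) (by fun_prop)]
    have hptw : ∀ p : (Ed d × Ed d) × Ed d,
        (‖p.1.1 - p.2‖₊ : ℝ≥0∞) ^ 2 ≤ (f + g) p ^ 2 := by
      intro p
      gcongr
      have : ‖p.1.1 - p.2‖₊ ≤ ‖p.1.1 - p.1.2‖₊ + ‖p.1.2 - p.2‖₊ := by
        have hd : p.1.1 - p.2 = (p.1.1 - p.1.2) + (p.1.2 - p.2) := by abel
        rw [hd]; exact nnnorm_add_le _ _
      simp only [hf, hg, Pi.add_apply]
      exact_mod_cast this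
    have hmink := ENNReal.lintegral_Lp_add_le (μ := β) (p := 2)
      (f := f) (g := g) (by fun_prop) (by fun_prop) one_le_two
    simp_rw [show (2:ℝ) = ((2:ℕ):ℝ) by norm_num, ENNReal.rpow_natCast] at hmink
    have e1 : ∫⁻ p, f p ^ 2 ∂β = Wcost π₁ := by
      rw [← hβ1, wcost_lintegral, lintegral_map (by fun_prop) measurable_fst]
    have e2 : ∫⁻ p, g p ^ 2 ∂β = Wcost π₂ := by
      rw [← hβ2, wcost_lintegral, lintegral_map (by fun_prop) (by fun_prop)]
    have hstep : Wcost (β.map (fun p => (p.1.1, p.2))) ^ (1/2 : ℝ)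
        ≤ (∫⁻ a, (f + g) a ^ 2 ∂β) ^ (1/2 : ℝ) := by
      refine ENNReal.rpow_le_rpow ?_ (by norm_num)
      rw [hcost3]
      exact lintegral_mono hptw
    have h12 : (1/2 : ℝ) = 1/(2:ℕ) := by norm_num
    calc Wcost (β.map (fun p => (p.1.1, p.2))) ^ (1/2 : ℝ)
        ≤ (∫⁻ a, (f + g) a ^ 2 ∂β) ^ (1/2 : ℝ) := hstep
      _ ≤ (∫⁻ a, f a ^ 2 ∂β) ^ (1/2 : ℝ) + (∫⁻ a, g a ^ 2 ∂β) ^ (1/2 : ℝ) := by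
          simpa using hmink
      _ = Wcost π₁ ^ (1/2 : ℝ) + Wcost π₂ ^ (1/2 : ℝ) := by rw [e1, e2]

lemma sqrt_add_le' (x y : ℝ) (hx : 0 ≤ x) (hy : 0 ≤ y) :
    Real.sqrt (x + y) ≤ Real.sqrt x + Real.sqrt y := by
  have h := Real.sqrt_le_sqrt (show x + y ≤ (Real.sqrt x + Real.sqrt y) ^ 2 by
    nlinarith [Real.sq_sqrt hx, Real.sq_sqrt hy, Real.sqrt_nonneg x, Real.sqrt_nonneg y,
      mul_nonneg (Real.sqrt_nonneg x) (Real.sqrt_nonneg y)])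
  rwa [Real.sqrt_sq (by positivity)] at h

lemma W2_triangle (μ ν ρ : P2 d) : W2 μ ρ ≤ W2 μ ν + W2 ν ρ := by
  refine le_of_forall_pos_le_add fun δ hδ => ?_
  set η : ℝ := (δ / 2) ^ 2 with hη_def
  have hη : 0 < η := by positivity
  have hsη : Real.sqrt η = δ / 2 := by
    rw [hη_def, Real.sqrt_sq (by positivity)]
  have h1 : W2i μ ν < W2i μ ν + ENNReal.ofReal η :=
    ENNReal.lt_add_right (W2i_lt_top μ ν).ne (ENNReal.ofReal_pos.2 hη).ne'
  have h2 : W2i ν ρ < W2i ν ρ + ENNReal.ofReal η :=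
    ENNReal.lt_add_right (W2i_lt_top ν ρ).ne (ENNReal.ofReal_pos.2 hη).ne'
  obtain ⟨π₁, hc1, hl1⟩ := exists_coupling_lt μ ν h1
  obtain ⟨π₂, hc2, hl2⟩ := exists_coupling_lt ν ρ h2
  obtain ⟨π₃, hc3, hm⟩ := glue hc1 hc2
  have hfin1 : Wcost π₁ < ⊤ :=
    hl1.trans (ENNReal.add_lt_top.2 ⟨W2i_lt_top μ ν, ENNReal.ofReal_lt_top⟩)
  have hfin2 : Wcost π₂ < ⊤ :=
    hl2.trans (ENNReal.add_lt_top.2 ⟨W2i_lt_top ν ρ, ENNReal.ofReal_lt_top⟩)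
  have hrfin : Wcost π₁ ^ (1/2 : ℝ) + Wcost π₂ ^ (1/2 : ℝ) < ⊤ :=
    ENNReal.add_lt_top.2 ⟨ENNReal.rpow_lt_top_of_nonneg (by norm_num) hfin1.ne,
      ENNReal.rpow_lt_top_of_nonneg (by norm_num) hfin2.ne⟩
  have hfin3 : Wcost π₃ < ⊤ := by
    by_contra h
    rw [not_lt, top_le_iff] at h
    rw [h, ENNReal.top_rpow_of_pos (by norm_num), top_le_iff] at hm
    exact hrfin.ne hm
  have key : W2 μ ρ ≤ Real.sqrt (Wcost π₃).toReal :=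
    W2_le_of_coupling hc3 hfin3.ne le_rfl
  have hr : Real.sqrt (Wcost π₃).toReal
      ≤ Real.sqrt (Wcost π₁).toReal + Real.sqrt (Wcost π₂).toReal := by
    have ht := ENNReal.toReal_mono hrfin.ne hm
    rw [ENNReal.toReal_add (ENNReal.rpow_lt_top_of_nonneg (by norm_num) hfin1.ne).ne
      (ENNReal.rpow_lt_top_of_nonneg (by norm_num) hfin2.ne).ne] at ht
    rw [← ENNReal.toReal_rpow, ← ENNReal.toReal_rpow, ← ENNReal.toReal_rpow] at ht
    rwa [Real.sqrt_eq_rpow, Real.sqrt_eq_rpow, Real.sqrt_eq_rpow]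
  have hb1 : Real.sqrt (Wcost π₁).toReal ≤ W2 μ ν + δ / 2 := by
    have ht : (Wcost π₁).toReal ≤ (W2i μ ν).toReal + η := by
      have := ENNReal.toReal_mono
        (ENNReal.add_lt_top.2 ⟨W2i_lt_top μ ν, ENNReal.ofReal_lt_top⟩).ne hl1.le
      rwa [ENNReal.toReal_add (W2i_lt_top μ ν).ne ENNReal.ofReal_ne_top,
        ENNReal.toReal_ofReal hη.le] at this
    calc Real.sqrt (Wcost π₁).toReal ≤ Real.sqrt ((W2i μ ν).toReal + η) :=
          Real.sqrt_le_sqrt ht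
      _ ≤ Real.sqrt (W2i μ ν).toReal + Real.sqrt η :=
          sqrt_add_le' _ _ ENNReal.toReal_nonneg hη.le
      _ = W2 μ ν + δ / 2 := by rw [hsη, W2_eq]
  have hb2 : Real.sqrt (Wcost π₂).toReal ≤ W2 ν ρ + δ / 2 := by
    have ht : (Wcost π₂).toReal ≤ (W2i ν ρ).toReal + η := by
      have := ENNReal.toReal_mono
        (ENNReal.add_lt_top.2 ⟨W2i_lt_top ν ρ, ENNReal.ofReal_lt_top⟩).ne hl2.le
      rwa [ENNReal.toReal_add (W2i_lt_top ν ρ).ne ENNReal.ofReal_ne_top,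
        ENNReal.toReal_ofReal hη.le] at this
    calc Real.sqrt (Wcost π₂).toReal ≤ Real.sqrt ((W2i ν ρ).toReal + η) :=
          Real.sqrt_le_sqrt ht
      _ ≤ Real.sqrt (W2i ν ρ).toReal + Real.sqrt η :=
          sqrt_add_le' _ _ ENNReal.toReal_nonneg hη.le
      _ = W2 ν ρ + δ / 2 := by rw [hsη, W2_eq]
  calc W2 μ ρ ≤ Real.sqrt (Wcost π₃).toReal := key
    _ ≤ Real.sqrt (Wcost π₁).toReal + Real.sqrt (Wcost π₂).toReal := hr
    _ ≤ (W2 μ ν + δ / 2) + (W2 ν ρ + δ / 2) := add_le_add hb1 hb2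
    _ = W2 μ ν + W2 ν ρ + δ := by ring

def itp {d : ℕ} (t : ℝ) : Ed d × Ed d → Ed d := fun p => p.1 + t • (p.2 - p.1)

lemma itp_meas {t : ℝ} : Measurable (itp (d := d) t) := by
  unfold itp; fun_prop

lemma lint_fst {π : Measure (Ed d × Ed d)} {μ ν : P2 d} (hc : IsCoupling π μ ν) :
    ∫⁻ p : Ed d × Ed d, (‖p.1‖₊ : ℝ≥0∞) ^ 2 ∂π = M2 μ := by
  have h := lintegral_map (μ := π) (f := fun x : Ed d => (‖x‖₊ : ℝ≥0∞) ^ 2)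
    (g := Prod.fst) (by fun_prop) measurable_fst
  rw [hc.1] at h
  exact h.symm

lemma wcost_rev (π : Measure (Ed d × Ed d)) :
    ∫⁻ p, (‖p.2 - p.1‖₊ : ℝ≥0∞) ^ 2 ∂π = Wcost π := by
  rw [wcost_lintegral]
  refine lintegral_congr fun p => ?_
  rw [show p.2 - p.1 = -(p.1 - p.2) by abel, nnnorm_neg]

lemma isP2_itp {π : Measure (Ed d × Ed d)} {μ ν : P2 d} (hc : IsCoupling π μ ν)
    (hfin : Wcost π < ⊤) {t : ℝ} (ht : t ∈ Icc (0:ℝ) 1) :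
    IsP2Meas (π.map (itp t)) := by
  have hp : IsProbabilityMeasure π := isProb_of_coupling hc
  constructor
  · exact Measure.isProbabilityMeasure_map itp_meas.aemeasurable
  · rw [lintegral_map (by fun_prop) itp_meas]
    have hb : ∀ p : Ed d × Ed d, (‖itp t p‖₊ : ℝ≥0∞) ^ 2
        ≤ 4 * (‖p.1‖₊ : ℝ≥0∞) ^ 2 + 4 * (‖p.2 - p.1‖₊ : ℝ≥0∞) ^ 2 := by
      intro p
      refine le_trans ?_ (sq_add_le _ _)
      have h1 : ‖itp t p‖₊ ≤ ‖p.1‖₊ + ‖p.2 - p.1‖₊ := by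
        refine (nnnorm_add_le _ _).trans ?_
        gcongr
        rw [nnnorm_smul]
        have : ‖t‖₊ ≤ 1 := by
          have habs : ‖t‖ ≤ 1 := by rw [Real.norm_eq_abs, abs_of_nonneg ht.1]; exact ht.2
          exact_mod_cast habs
        calc ‖t‖₊ * ‖p.2 - p.1‖₊ ≤ 1 * ‖p.2 - p.1‖₊ := mul_le_mul_of_nonneg_right this (by positivity)
          _ = ‖p.2 - p.1‖₊ := one_mul _
      have h2 : ((‖p.1‖₊ + ‖p.2 - p.1‖₊ : ℝ≥0) : ℝ≥0∞)
          = (‖p.1‖₊ : ℝ≥0∞) + (‖p.2 - p.1‖₊ : ℝ≥0∞) := by push_cast; ring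
      calc (‖itp t p‖₊ : ℝ≥0∞) ^ 2 ≤ ((‖p.1‖₊ + ‖p.2 - p.1‖₊ : ℝ≥0) : ℝ≥0∞) ^ 2 := by
            gcongr
        _ = ((‖p.1‖₊ : ℝ≥0∞) + (‖p.2 - p.1‖₊ : ℝ≥0∞)) ^ 2 := by rw [h2]
    calc ∫⁻ p, (‖itp t p‖₊ : ℝ≥0∞) ^ 2 ∂π
        ≤ ∫⁻ p : Ed d × Ed d, (4 * (‖p.1‖₊ : ℝ≥0∞) ^ 2 + 4 * (‖p.2 - p.1‖₊ : ℝ≥0∞) ^ 2) ∂π :=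
          lintegral_mono hb
      _ = 4 * M2 μ + 4 * Wcost π := by
          rw [lintegral_add_left (by fun_prop), lintegral_const_mul _ (by fun_prop),
            lintegral_const_mul _ (by fun_prop), lint_fst hc, wcost_rev]
      _ < ⊤ := ENNReal.add_lt_top.2 ⟨ENNReal.mul_lt_top (by simp) (M2_lt_top μ),
          ENNReal.mul_lt_top (by simp) hfin⟩

lemma wcost_map_pair (π : Measure (Ed d × Ed d)) (s t : ℝ) :
    Wcost (π.map (fun p => (itp s p, itp t p)))
      = (‖s - t‖₊ : ℝ≥0∞) ^ 2 * Wcost π := by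
  rw [wcost_lintegral, lintegral_map (by fun_prop) (by exact (itp_meas).prodMk itp_meas)]
  have h : ∀ p : Ed d × Ed d, itp (d := d) s p - itp t p = (s - t) • (p.2 - p.1) := by
    intro p
    simp only [itp]
    rw [sub_smul]
    abel
  simp_rw [h, nnnorm_smul]
  have h2 : ∀ p : Ed d × Ed d, ((‖s - t‖₊ * ‖p.2 - p.1‖₊ : ℝ≥0) : ℝ≥0∞) ^ 2
      = (‖s - t‖₊ : ℝ≥0∞) ^ 2 * (‖p.2 - p.1‖₊ : ℝ≥0∞) ^ 2 := by
    intro p; push_cast; ring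
  simp_rw [h2]
  rw [lintegral_const_mul _ (by fun_prop), wcost_rev]

lemma wcost_map_left (π : Measure (Ed d × Ed d)) (t : ℝ) :
    Wcost (π.map (fun p => (p.1, itp t p)))
      = (‖t‖₊ : ℝ≥0∞) ^ 2 * Wcost π := by
  rw [wcost_lintegral, lintegral_map (by fun_prop) (by exact measurable_fst.prodMk itp_meas)]
  have h : ∀ p : Ed d × Ed d, p.1 - itp (d := d) t p = (-t) • (p.2 - p.1) := by
    intro p
    simp only [itp, neg_smul]
    abel
  simp_rw [h, nnnorm_smul, nnnorm_neg]
  have h2 : ∀ p : Ed d × Ed d, ((‖t‖₊ * ‖p.2 - p.1‖₊ : ℝ≥0) : ℝ≥0∞) ^ 2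
      = (‖t‖₊ : ℝ≥0∞) ^ 2 * (‖p.2 - p.1‖₊ : ℝ≥0∞) ^ 2 := by
    intro p; push_cast; ring
  simp_rw [h2]
  rw [lintegral_const_mul _ (by fun_prop), wcost_rev]

lemma sqrt_toReal_mul_sq (t : ℝ) (W : ℝ≥0∞) (hW : W ≠ ⊤) :
    Real.sqrt (((‖t‖₊ : ℝ≥0∞) ^ 2 * W).toReal) = |t| * Real.sqrt W.toReal := by
  rw [ENNReal.toReal_mul]
  rw [show ((‖t‖₊ : ℝ≥0∞) ^ 2).toReal = |t| ^ 2 by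
    rw [← ENNReal.coe_pow, ENNReal.coe_toReal]
    push_cast
    rw [Real.norm_eq_abs]]
  rw [Real.sqrt_mul (by positivity), Real.sqrt_sq (abs_nonneg t)]

lemma phi_le_on_ball (mhat : P2 d) (φ : P2 d → ℝ) (hφ : UCmem mhat φ) (R : ℝ) (hR : 0 < R) :
    ∃ B : ℝ, ∀ μ ∈ ballW mhat R, φ μ ≤ B := by
  obtain ⟨δ, hδ, huc⟩ := hφ.unif_cont (R + 1) (by linarith) 1 one_pos
  set n : ℕ := max 1 ⌈(R + 1) / δ⌉₊ with hn
  have hn1 : 1 ≤ n := le_max_left _ _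
  have hnpos : (0:ℝ) < n := by exact_mod_cast hn1
  have hstep : (R + 1) / n ≤ δ := by
    have h1 : (R + 1) / δ ≤ (⌈(R + 1) / δ⌉₊ : ℝ) := Nat.le_ceil _
    have h2 : (⌈(R + 1) / δ⌉₊ : ℝ) ≤ n := by exact_mod_cast le_max_right 1 _
    rw [div_le_iff₀ hnpos]
    rw [div_le_iff₀ hδ] at h1
    calc R + 1 ≤ (⌈(R + 1) / δ⌉₊ : ℝ) * δ := h1
      _ ≤ n * δ := by gcongr
      _ = δ * n := mul_comm _ _
  refine ⟨n, fun μ hμ => ?_⟩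
  have hW : W2 mhat μ ≤ R := hμ
  have hWi : W2i mhat μ ≤ ENNReal.ofReal (R ^ 2) := by
    have h1 : (W2i mhat μ).toReal ≤ R ^ 2 := by
      have h2 := W2_sq mhat μ
      nlinarith [W2_nonneg mhat μ]
    exact (ENNReal.le_ofReal_iff_toReal_le (W2i_lt_top mhat μ).ne (by positivity)).2 h1
  have hlt : W2i mhat μ < ENNReal.ofReal (R ^ 2) + 1 :=
    lt_of_le_of_lt hWi (ENNReal.lt_add_right ENNReal.ofReal_ne_top one_ne_zero)
  obtain ⟨π, hc, hπ⟩ := exists_coupling_lt mhat μ hlt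
  have hfin : Wcost π < ⊤ :=
    hπ.trans (ENNReal.add_lt_top.2 ⟨ENNReal.ofReal_lt_top, ENNReal.one_lt_top⟩)
  set L : ℝ := Real.sqrt (Wcost π).toReal with hL
  have hL0 : 0 ≤ L := Real.sqrt_nonneg _
  have hLle : L ≤ R + 1 := by
    have h1 : (Wcost π).toReal ≤ R ^ 2 + 1 := by
      have h2 := ENNReal.toReal_mono
        (ENNReal.add_lt_top.2 ⟨ENNReal.ofReal_lt_top, ENNReal.one_lt_top⟩).ne hπ.le
      rwa [ENNReal.toReal_add ENNReal.ofReal_ne_top ENNReal.one_ne_top,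
        ENNReal.toReal_ofReal (by positivity), ENNReal.toReal_one] at h2
    calc L ≤ Real.sqrt (R ^ 2 + 1) := Real.sqrt_le_sqrt h1
      _ ≤ Real.sqrt ((R + 1) ^ 2) := Real.sqrt_le_sqrt (by nlinarith)
      _ = R + 1 := Real.sqrt_sq (by positivity)
  have hmemt : ∀ i : ℕ, i ≤ n → ((i:ℝ)/n) ∈ Icc (0:ℝ) 1 := by
    intro i hi
    constructor
    · positivity
    · rw [div_le_one hnpos]; exact_mod_cast hi
  set μt : ℕ → P2 d := fun i =>
    if h : ((i:ℝ)/n) ∈ Icc (0:ℝ) 1 then ⟨π.map (itp ((i:ℝ)/n)), isP2_itp hc hfin h⟩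
    else mhat with hμt
  have hμt_val : ∀ i, i ≤ n → (μt i).1 = π.map (itp ((i:ℝ)/n)) := by
    intro i hi
    rw [hμt]
    exact congrArg Subtype.val (dif_pos (hmemt i hi)
      (t := fun h => (⟨π.map (itp ((i:ℝ)/n)), isP2_itp hc hfin h⟩ : P2 d)) (e := fun _ => mhat))
  have hitp0 : itp (d := d) 0 = Prod.fst := by
    funext p; simp [itp]
  have hitp1 : itp (d := d) 1 = Prod.snd := by
    funext p; simp [itp]
  have h0 : μt 0 = mhat := by
    apply Subtype.ext
    rw [hμt_val 0 (Nat.zero_le n)]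
    rw [show ((0:ℕ):ℝ)/(n:ℝ) = 0 by simp, hitp0, hc.1]
  have hlast : μt n = μ := by
    apply Subtype.ext
    rw [hμt_val n le_rfl]
    rw [show ((n:ℕ):ℝ)/(n:ℝ) = 1 from div_self hnpos.ne', hitp1, hc.2]
  have hball : ∀ i, i ≤ n → W2 mhat (μt i) ≤ R + 1 := by
    intro i hi
    set t : ℝ := (i:ℝ)/n with ht
    have hcoup : IsCoupling (π.map (fun p => (p.1, itp t p))) mhat (μt i) := by
      constructor
      · rw [Measure.map_map measurable_fst (measurable_fst.prodMk itp_meas)]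
        exact hc.1
      · rw [Measure.map_map measurable_snd (measurable_fst.prodMk itp_meas),
          hμt_val i hi]
        rfl
    have hcost := wcost_map_left π t
    have hcfin : (‖t‖₊ : ℝ≥0∞) ^ 2 * Wcost π ≠ ⊤ :=
      (ENNReal.mul_lt_top (by exact_mod_cast ENNReal.coe_lt_top.trans_le le_rfl) hfin).ne
    have := W2_le_of_coupling hcoup hcfin hcost.le
    rw [sqrt_toReal_mul_sq t _ hfin.ne] at this
    refine this.trans ?_
    have habs : |t| ≤ 1 := by
      rw [abs_of_nonneg (hmemt i hi).1]; exact (hmemt i hi).2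
    calc |t| * L ≤ 1 * L := by gcongr
      _ = L := one_mul L
      _ ≤ R + 1 := hLle
  have hadj : ∀ i : ℕ, i + 1 ≤ n → W2 (μt i) (μt (i+1)) ≤ δ := by
    intro i hi
    set t : ℝ := (i:ℝ)/n with ht
    set s : ℝ := ((i+1:ℕ):ℝ)/n with hs
    have hcoup : IsCoupling (π.map (fun p => (itp t p, itp s p))) (μt i) (μt (i+1)) := by
      constructor
      · rw [Measure.map_map measurable_fst (itp_meas.prodMk itp_meas),
          hμt_val i (Nat.le_of_succ_le hi)]
        rfl
      · rw [Measure.map_map measurable_snd (itp_meas.prodMk itp_meas),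
          hμt_val (i+1) hi]
        rfl
    have hcost := wcost_map_pair π t s
    have hcfin : (‖t - s‖₊ : ℝ≥0∞) ^ 2 * Wcost π ≠ ⊤ :=
      (ENNReal.mul_lt_top (by exact_mod_cast ENNReal.coe_lt_top.trans_le le_rfl) hfin).ne
    have hle := W2_le_of_coupling hcoup hcfin hcost.le
    rw [sqrt_toReal_mul_sq (t - s) _ hfin.ne] at hle
    refine hle.trans ?_
    have habs : |t - s| = 1 / n := by
      rw [ht, hs]
      push_cast
      rw [div_sub_div_same, abs_div, abs_of_nonneg (by positivity : (0:ℝ) ≤ (n:ℝ))]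
      rw [show (i:ℝ) - ((i:ℝ) + 1) = -1 by ring, abs_neg, abs_one]
    rw [habs]
    calc 1 / (n:ℝ) * L ≤ 1 / n * (R + 1) := by gcongr
      _ = (R + 1) / n := by ring
      _ ≤ δ := hstep
  have hclaim : ∀ i : ℕ, i ≤ n → φ (μt i) ≤ i := by
    intro i
    induction i with
    | zero => intro _; rw [h0, hφ.zero_at]; simp
    | succ k ih =>
      intro hk
      have hk' : k ≤ n := Nat.le_of_succ_le hk
      have h1 := huc (μt (k+1)) (μt k) (hball (k+1) hk) (hball k hk')
        (by rw [W2_symm]; exact hadj k hk)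
      have h2 := (abs_le.1 h1).2
      have h3 := ih hk'
      push_cast
      push_cast at h3
      linarith
  have := hclaim n le_rfl
  rwa [hlast] at this

instance : Nonempty (P2 d) := ⟨dirac0 d⟩

lemma infConv_nonneg {φ : P2 d → ℝ} {mhat : P2 d} (hφ : UCmem mhat φ) (κ : ℝ) (m : P2 d) :
    0 ≤ infConv φ κ m :=
  Real.iInf_nonneg fun μ => add_nonneg (hφ.nonneg μ) (by positivity)

lemma infConv_bdd {φ : P2 d → ℝ} {mhat : P2 d} (hφ : UCmem mhat φ) (κ : ℝ) (m : P2 d) :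
    BddBelow (range fun μ : P2 d => φ μ + 1 / (2 * κ ^ 2) * W2 m μ ^ 2) :=
  ⟨0, by rintro x ⟨μ, rfl⟩; exact add_nonneg (hφ.nonneg μ) (by positivity)⟩

end S5


open S5 in
set_option maxHeartbeats 2000000 in
/-- near-minimality of Ekeland points for the inf-convolution. -/
theorem statement5 {d : ℕ} (mhat : P2 d) (R : ℝ) (hR : 0 < R)
    (φ : P2 d → ℝ) (hφ : UCmem mhat φ) (κ ε : ℝ) (hκ : κ ∈ Ioc (0 : ℝ) 1) (hε : 0 < ε)
    (m : P2 d) (hm : W2 mhat m ≤ R) (μb : P2 d) (hek : EkelandPt φ κ ε m μb) :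
    φ μb + 1 / (2 * κ ^ 2) * W2 m μb ^ 2 ≤ infConv φ κ m + Nke mhat φ κ ε R m := by
  obtain ⟨hκ0, hκ1⟩ := hκ
  set c : ℝ := 1 / (2 * κ ^ 2) with hc
  set w : ℝ := W2 m μb with hw
  have hw0 : 0 ≤ w := W2_nonneg m μb
  set S : ℝ := Sfun mhat φ R with hS
  set I : ℝ := infConv φ κ m with hI
  have hI0 : 0 ≤ I := infConv_nonneg hφ κ m
  -- φ m ≤ S
  obtain ⟨B, hB⟩ := phi_le_on_ball mhat φ hφ R hR
  have hφmS : φ m ≤ S := by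
    refine le_csSup ⟨B, ?_⟩ ⟨m, hm, rfl⟩
    rintro x ⟨μ, hμ, rfl⟩
    exact hB μ hμ
  -- quadratic bound on w
  have hquad : c * w ^ 2 + ε * w ≤ S := by
    have h1 := hek.1
    rw [W2_symm μb m, ← hw] at h1
    have h2 := hφ.nonneg μb
    have := hφmS
    linarith
  have hwM : w ≤ Mke mhat φ κ ε R := by
    have hκ2 : (0:ℝ) < κ ^ 2 := by positivity
    have h1 : w ^ 2 + 2 * ε * κ ^ 2 * w ≤ 2 * κ ^ 2 * S := by
      have h6 := mul_le_mul_of_nonneg_left hquad (by positivity : (0:ℝ) ≤ 2 * κ ^ 2)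
      have h5 : (2 * κ ^ 2) * (c * w ^ 2) = w ^ 2 := by rw [hc]; field_simp
      nlinarith [h6, h5]
    have h2 : (w + ε * κ ^ 2) ^ 2 ≤ κ ^ 2 * (2 * S + ε ^ 2 * κ ^ 2) := by nlinarith
    have h3 : w + ε * κ ^ 2 ≤ Real.sqrt (κ ^ 2 * (2 * S + ε ^ 2 * κ ^ 2)) := by
      have h4 := Real.sqrt_le_sqrt h2
      rwa [Real.sqrt_sq (by positivity)] at h4
    rw [Real.sqrt_mul (by positivity) _, Real.sqrt_sq hκ0.le] at h3
    rw [Mke]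
    linarith
  -- final approximation argument
  refine le_of_forall_pos_le_add fun ι hι => ?_
  set η : ℝ := min (ι/2) ((ι/(2*ε*κ))^2/2) with hη_def
  have hεκ : 0 < ε * κ := by positivity
  have hη : 0 < η := lt_min (by positivity) (by positivity)
  have hlt : (⨅ μ : P2 d, (φ μ + 1 / (2 * κ ^ 2) * W2 m μ ^ 2)) < I + η := by
    have : infConv φ κ m < I + η := by rw [← hI]; linarith
    exact this
  obtain ⟨μ, hμ⟩ := exists_lt_of_ciInf_lt hlt
  rw [← hc] at hμ
  have hφμ := hφ.nonneg μ
  set v : ℝ := W2 m μ with hv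
  have hv0 : 0 ≤ v := W2_nonneg m μ
  have hvb : v ≤ κ * Real.sqrt (2*I) + κ * Real.sqrt (2*η) := by
    have hc0 : 0 ≤ c := by rw [hc]; positivity
    have h1 : c * v ^ 2 ≤ I + η := by nlinarith [hφμ, hμ]
    have h2 : v ^ 2 ≤ κ^2 * (2*(I+η)) := by
      have h6 := mul_le_mul_of_nonneg_left h1 (by positivity : (0:ℝ) ≤ 2*κ^2)
      have h5 : (2*κ^2) * (c * v^2) = v^2 := by rw [hc]; field_simp
      nlinarith [h6, h5]
    have h3 : v ≤ Real.sqrt (κ^2 * (2*(I+η))) := by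
      have h4 := Real.sqrt_le_sqrt h2
      rwa [Real.sqrt_sq hv0] at h4
    rw [Real.sqrt_mul (by positivity) _, Real.sqrt_sq hκ0.le] at h3
    have h7 : Real.sqrt (2*(I+η)) ≤ Real.sqrt (2*I) + Real.sqrt (2*η) := by
      rw [show 2*(I+η) = 2*I + 2*η by ring]
      exact sqrt_add_le' _ _ (by linarith) (by linarith)
    calc v ≤ κ * Real.sqrt (2*(I+η)) := h3
      _ ≤ κ * (Real.sqrt (2*I) + Real.sqrt (2*η)) :=
          mul_le_mul_of_nonneg_left h7 hκ0.le
      _ = κ * Real.sqrt (2*I) + κ * Real.sqrt (2*η) := by ring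
  have htri : W2 μb μ ≤ w + v := by
    calc W2 μb μ ≤ W2 μb m + W2 m μ := W2_triangle μb m μ
      _ = w + v := by rw [W2_symm μb m, ← hw, ← hv]
  have hek2 := hek.2 μ
  rw [← hc, ← hw, ← hv] at hek2
  have hsqη : Real.sqrt (2*η) ≤ ι/(2*ε*κ) := by
    have h8 : 2*η ≤ (ι/(2*ε*κ))^2 := by
      have h9 : η ≤ (ι/(2*ε*κ))^2/2 := min_le_right _ _
      linarith
    have h4 := Real.sqrt_le_sqrt h8
    rwa [Real.sqrt_sq (by positivity)] at h4
  have hlast : ε*κ*Real.sqrt (2*η) ≤ ι/2 := by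
    calc ε*κ*Real.sqrt (2*η) ≤ ε*κ*(ι/(2*ε*κ)) := by
          rw [mul_assoc, mul_assoc]
          exact mul_le_mul_of_nonneg_left
            (mul_le_mul_of_nonneg_left hsqη hκ0.le) hε.le
      _ = ι/2 := by field_simp
  have hημ : η ≤ ι/2 := min_le_left _ _
  have hNke : Nke mhat φ κ ε R m = ε * κ * Real.sqrt (2*I) + ε * Mke mhat φ κ ε R := by
    rw [Nke, hI]
  have hWv : ε * W2 μb μ ≤ ε * (w + v) := mul_le_mul_of_nonneg_left htri hε.le
  have hwv : ε * (w + v) ≤ ε * Mke mhat φ κ ε R + (ε*κ*Real.sqrt (2*I) + ε*κ*Real.sqrt (2*η)) := by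
    have h10 := mul_le_mul_of_nonneg_left hwM hε.le
    have h11 := mul_le_mul_of_nonneg_left hvb hε.le
    nlinarith [h10, h11]
  calc φ μb + c * w ^ 2 ≤ φ μ + c * v ^ 2 + ε * W2 μb μ := hek2
    _ ≤ (I + η) + ε * (w + v) := by linarith [hμ, hWv]
    _ ≤ I + Nke mhat φ κ ε R m + ι := by
        rw [hNke]; linarith [hwv, hlast, hημ]
end
end

section
/- Let m̂ ∈ P₂(ℝ^d), R > 0, φ ∈ UC_m̂, κ ∈ (0,1], ε ∈ (0,1], m ∈ B_R(m̂), and suppose there exists an Ekeland point μ̄ for (φ,κ,ε,m). Then φ(m) − φ_κ(m) ≤ ω_R^ε(M_κ^ε(R)) + N_κ^ε(R,m). -/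
open MeasureTheory Set Filter Topology
open scoped ENNReal NNReal InnerProductSpace

noncomputable section

namespace S6
open ProbabilityTheory
variable {d : ℕ}

lemma costFn_meas : Measurable (fun p : Ed d × Ed d => (‖p.1 - p.2‖₊ : ℝ≥0∞) ^ 2) :=
  ((measurable_fst.sub measurable_snd).nnnorm.coe_nnreal_ennreal).pow_const 2

def mom (μ : P2 d) : ℝ≥0∞ := ∫⁻ x, (‖x‖₊ : ℝ≥0∞) ^ 2 ∂μ.1

lemma mom_lt_top (μ : P2 d) : mom μ < ⊤ := μ.2.2

lemma isProb_coupling {π : Measure (Ed d × Ed d)} {μ ν : P2 d} (h : IsCoupling π μ ν) :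
    IsProbabilityMeasure π := by
  haveI := μ.2.1
  constructor
  have h1 : π.map Prod.fst Set.univ = 1 := by rw [h.1]; exact μ.2.1.measure_univ
  rwa [Measure.map_apply measurable_fst MeasurableSet.univ, Set.preimage_univ] at h1

lemma lintegral_fst_coupling {π : Measure (Ed d × Ed d)} {μ ν : P2 d} (h : IsCoupling π μ ν)
    {f : Ed d → ℝ≥0∞} (hf : Measurable f) :
    ∫⁻ p, f p.1 ∂π = ∫⁻ x, f x ∂μ.1 := by
  rw [← h.1, lintegral_map hf measurable_fst]

lemma lintegral_snd_coupling {π : Measure (Ed d × Ed d)} {μ ν : P2 d} (h : IsCoupling π μ ν)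
    {f : Ed d → ℝ≥0∞} (hf : Measurable f) :
    ∫⁻ p, f p.2 ∂π = ∫⁻ x, f x ∂ν.1 := by
  rw [← h.2, lintegral_map hf measurable_snd]

lemma coupling_prod (μ ν : P2 d) : IsCoupling (μ.1.prod ν.1) μ ν := by
  haveI := μ.2.1; haveI := ν.2.1
  constructor
  · show (μ.1.prod ν.1).map Prod.fst = μ.1
    have := Measure.fst_prod (μ := μ.1) (ν := ν.1)
    simpa [Measure.fst] using this
  · have := Measure.snd_prod (μ := μ.1) (ν := ν.1)
    simpa [Measure.snd] using this

lemma ennreal_add_sq_le (a b : ℝ≥0∞) : (a + b) ^ 2 ≤ 2 * a ^ 2 + 2 * b ^ 2 := by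
  rcases eq_or_ne a ⊤ with ha | ha
  · subst ha; simp [ENNReal.top_pow, ENNReal.add_eq_top]
  rcases eq_or_ne b ⊤ with hb | hb
  · subst hb; simp [ENNReal.top_pow, ENNReal.add_eq_top]
  lift a to ℝ≥0 using ha
  lift b to ℝ≥0 using hb
  rw [← ENNReal.coe_add, ← ENNReal.coe_pow]
  have h2 : ((2:ℝ≥0∞)) = ((2:ℝ≥0) : ℝ≥0∞) := by norm_cast
  rw [← ENNReal.coe_pow, ← ENNReal.coe_pow, h2, ← ENNReal.coe_mul, ← ENNReal.coe_mul,
    ← ENNReal.coe_add, ENNReal.coe_le_coe, ← NNReal.coe_le_coe]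
  push_cast
  nlinarith [sq_nonneg ((a:ℝ) - (b:ℝ))]

end S6
namespace S6
open ProbabilityTheory
variable {d : ℕ}

/-- squared Wasserstein "distance" in `ℝ≥0∞`. -/
def W2sq (μ ν : P2 d) : ℝ≥0∞ :=
  ⨅ π ∈ {π : Measure (Ed d × Ed d) | IsCoupling π μ ν}, Wcost π

lemma W2_eq (μ ν : P2 d) : W2 μ ν = Real.sqrt (W2sq μ ν).toReal := rfl

lemma W2sq_le_Wcost {π : Measure (Ed d × Ed d)} {μ ν : P2 d} (h : IsCoupling π μ ν) :
    W2sq μ ν ≤ Wcost π := iInf₂_le π h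

lemma nnnorm_sq_le (x y : Ed d) :
    (‖x - y‖₊ : ℝ≥0∞) ^ 2 ≤ 2 * (‖x‖₊ : ℝ≥0∞) ^ 2 + 2 * (‖y‖₊ : ℝ≥0∞) ^ 2 := by
  refine le_trans ?_ (ennreal_add_sq_le _ _)
  have h : ‖x - y‖₊ ≤ ‖x‖₊ + ‖y‖₊ := nnnorm_sub_le x y
  have : (‖x - y‖₊ : ℝ≥0∞) ≤ (‖x‖₊ : ℝ≥0∞) + (‖y‖₊ : ℝ≥0∞) := by exact_mod_cast h
  exact pow_le_pow_left' this 2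

lemma Wcost_le_of_coupling {π : Measure (Ed d × Ed d)} {μ ν : P2 d} (h : IsCoupling π μ ν) :
    Wcost π ≤ 2 * mom μ + 2 * mom ν := by
  have hmeas1 : Measurable fun x : Ed d => (‖x‖₊ : ℝ≥0∞) ^ 2 :=
    (measurable_nnnorm.coe_nnreal_ennreal).pow_const 2
  calc Wcost π ≤ ∫⁻ p : Ed d × Ed d, (2 * (‖p.1‖₊ : ℝ≥0∞) ^ 2 + 2 * (‖p.2‖₊ : ℝ≥0∞) ^ 2) ∂π :=
        lintegral_mono fun p => nnnorm_sq_le p.1 p.2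
    _ = 2 * mom μ + 2 * mom ν := by
        have e1 : ∫⁻ p : Ed d × Ed d, (2 * (‖p.1‖₊ : ℝ≥0∞) ^ 2 + 2 * (‖p.2‖₊ : ℝ≥0∞) ^ 2) ∂π
            = (∫⁻ p : Ed d × Ed d, 2 * (‖p.1‖₊ : ℝ≥0∞) ^ 2 ∂π)
              + ∫⁻ p : Ed d × Ed d, 2 * (‖p.2‖₊ : ℝ≥0∞) ^ 2 ∂π :=
          lintegral_add_left ((hmeas1.comp measurable_fst).const_mul 2) _
        have e2 : ∫⁻ p : Ed d × Ed d, 2 * (‖p.1‖₊ : ℝ≥0∞) ^ 2 ∂π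
            = 2 * ∫⁻ p : Ed d × Ed d, (‖p.1‖₊ : ℝ≥0∞) ^ 2 ∂π :=
          lintegral_const_mul 2 (hmeas1.comp measurable_fst)
        have e3 : ∫⁻ p : Ed d × Ed d, 2 * (‖p.2‖₊ : ℝ≥0∞) ^ 2 ∂π
            = 2 * ∫⁻ p : Ed d × Ed d, (‖p.2‖₊ : ℝ≥0∞) ^ 2 ∂π :=
          lintegral_const_mul 2 (hmeas1.comp measurable_snd)
        rw [e1, e2, e3, lintegral_fst_coupling h hmeas1, lintegral_snd_coupling h hmeas1]
        rfl

lemma W2sq_lt_top (μ ν : P2 d) : W2sq μ ν < ⊤ :=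
  lt_of_le_of_lt (le_trans (W2sq_le_Wcost (coupling_prod μ ν))
    (Wcost_le_of_coupling (coupling_prod μ ν)))
    (by
      have h1 := mom_lt_top μ; have h2 := mom_lt_top ν
      exact ENNReal.add_lt_top.2 ⟨ENNReal.mul_lt_top (by simp) h1,
        ENNReal.mul_lt_top (by simp) h2⟩)

lemma W2sq_self (μ : P2 d) : W2sq μ μ = 0 := by
  refine le_antisymm ?_ zero_le
  have hdiag : Measurable (fun x : Ed d => (x, x)) := measurable_id.prodMk measurable_id
  have hc : IsCoupling (μ.1.map fun x => (x, x)) μ μ := by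
    constructor
    · rw [Measure.map_map measurable_fst hdiag]
      simp [Function.comp_def, Measure.map_id']
    · rw [Measure.map_map measurable_snd hdiag]
      simp [Function.comp_def, Measure.map_id']
  refine le_trans (W2sq_le_Wcost hc) ?_
  rw [Wcost, lintegral_map costFn_meas hdiag]
  simp

lemma W2_self (μ : P2 d) : W2 μ μ = 0 := by rw [W2_eq, W2sq_self]; simp

lemma W2_nonneg (μ ν : P2 d) : 0 ≤ W2 μ ν := Real.sqrt_nonneg _

lemma coupling_swap {π : Measure (Ed d × Ed d)} {μ ν : P2 d} (h : IsCoupling π μ ν) :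
    IsCoupling (π.map Prod.swap) ν μ := by
  constructor
  · rw [Measure.map_map measurable_fst measurable_swap]
    exact h.2
  · rw [Measure.map_map measurable_snd measurable_swap]
    exact h.1

lemma Wcost_swap (π : Measure (Ed d × Ed d)) : Wcost (π.map Prod.swap) = Wcost π := by
  rw [Wcost, lintegral_map costFn_meas measurable_swap]
  simp only [Wcost, Prod.fst_swap, Prod.snd_swap]
  congr 1
  ext p
  rw [← neg_sub, nnnorm_neg]

lemma W2sq_symm (μ ν : P2 d) : W2sq μ ν = W2sq ν μ := by
  have key : ∀ a b : P2 d, W2sq a b ≤ W2sq b a := by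
    intro a b
    refine le_iInf₂ fun π hπ => ?_
    calc W2sq a b ≤ Wcost (π.map Prod.swap) := W2sq_le_Wcost (coupling_swap hπ)
      _ = Wcost π := Wcost_swap π
  exact le_antisymm (key μ ν) (key ν μ)

lemma W2_symm (μ ν : P2 d) : W2 μ ν = W2 ν μ := by rw [W2_eq, W2_eq, W2sq_symm]

lemma sq_W2 (μ ν : P2 d) : W2 μ ν ^ 2 = (W2sq μ ν).toReal := by
  rw [W2_eq]; exact Real.sq_sqrt ENNReal.toReal_nonneg

lemma exists_coupling_lt (μ ν : P2 d) {η : ℝ≥0∞} (hη : 0 < η) :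
    ∃ π : Measure (Ed d × Ed d), IsCoupling π μ ν ∧ Wcost π < W2sq μ ν + η ∧ Wcost π ≠ ⊤ := by
  have hlt : W2sq μ ν < W2sq μ ν + η :=
    ENNReal.lt_add_right (W2sq_lt_top μ ν).ne hη.ne'
  have h2 : ⨅ π ∈ {π : Measure (Ed d × Ed d) | IsCoupling π μ ν}, Wcost π < W2sq μ ν + η := hlt
  rw [iInf_lt_iff] at h2
  obtain ⟨π, hπ⟩ := h2
  rw [iInf_lt_iff] at hπ
  obtain ⟨hmem, hlt'⟩ := hπ
  refine ⟨π, hmem, hlt', ?_⟩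
  exact (lt_of_lt_of_le hlt' le_top).ne  -- fix below
end S6
namespace S6
open ProbabilityTheory
variable {d : ℕ}

lemma map_compProd_prod_left {α β γ : Type*} [MeasurableSpace α] [MeasurableSpace β]
    [MeasurableSpace γ] (μ : Measure α) [SFinite μ] (κ : Kernel α β) (η : Kernel α γ)
    [IsMarkovKernel κ] [IsMarkovKernel η] :
    (μ ⊗ₘ (κ ×ₖ η)).map (fun p => (p.1, p.2.1)) = μ ⊗ₘ κ := by
  have hmeas : Measurable fun p : α × β × γ => (p.1, p.2.1) :=
    measurable_fst.prodMk (measurable_snd.fst)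
  ext s hs
  rw [Measure.map_apply hmeas hs, Measure.compProd_apply (hmeas hs), Measure.compProd_apply hs]
  congr 1
  ext a
  have hset : (Prod.mk a ⁻¹' ((fun p : α × β × γ => (p.1, p.2.1)) ⁻¹' s))
      = (Prod.mk a ⁻¹' s) ×ˢ Set.univ := by
    ext q; simp [Set.mem_prod]
  rw [hset, Kernel.prod_apply, Measure.prod_prod]
  simp

lemma map_compProd_prod_right {α β γ : Type*} [MeasurableSpace α] [MeasurableSpace β]
    [MeasurableSpace γ] (μ : Measure α) [SFinite μ] (κ : Kernel α β) (η : Kernel α γ)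
    [IsMarkovKernel κ] [IsMarkovKernel η] :
    (μ ⊗ₘ (κ ×ₖ η)).map (fun p => (p.1, p.2.2)) = μ ⊗ₘ η := by
  have hmeas : Measurable fun p : α × β × γ => (p.1, p.2.2) :=
    measurable_fst.prodMk (measurable_snd.snd)
  ext s hs
  rw [Measure.map_apply hmeas hs, Measure.compProd_apply (hmeas hs), Measure.compProd_apply hs]
  congr 1
  ext a
  have hset : (Prod.mk a ⁻¹' ((fun p : α × β × γ => (p.1, p.2.2)) ⁻¹' s))
      = Set.univ ×ˢ (Prod.mk a ⁻¹' s) := by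
    ext q; simp [Set.mem_prod]
  rw [hset, Kernel.prod_apply, Measure.prod_prod]
  simp

lemma glue {μ ν ρ : P2 d} {π₁ π₂ : Measure (Ed d × Ed d)}
    (h₁ : IsCoupling π₁ μ ν) (h₂ : IsCoupling π₂ ν ρ) :
    ∃ π₃ : Measure (Ed d × Ed d), IsCoupling π₃ μ ρ ∧
      Wcost π₃ ^ (1/2 : ℝ) ≤ Wcost π₁ ^ (1/2 : ℝ) + Wcost π₂ ^ (1/2 : ℝ) := by
  haveI hπ₁ : IsProbabilityMeasure π₁ := isProb_coupling h₁
  haveI hπ₂ : IsProbabilityMeasure π₂ := isProb_coupling h₂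
  set ρ₁ : Measure (Ed d × Ed d) := π₁.map Prod.swap with hρ₁
  haveI : IsProbabilityMeasure ρ₁ := isProb_coupling (coupling_swap h₁)
  have hρ₁fst : ρ₁.fst = ν.1 := (coupling_swap h₁).1
  have hπ₂fst : π₂.fst = ν.1 := h₂.1
  haveI : IsProbabilityMeasure ν.1 := ν.2.1
  set K₁ := ρ₁.condKernel with hK₁
  set K₂ := π₂.condKernel with hK₂
  have hd₁ : ν.1 ⊗ₘ K₁ = ρ₁ := by rw [← hρ₁fst]; exact ρ₁.disintegrate K₁
  have hd₂ : ν.1 ⊗ₘ K₂ = π₂ := by rw [← hπ₂fst]; exact π₂.disintegrate K₂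
  set β : Measure (Ed d × Ed d × Ed d) := ν.1 ⊗ₘ (K₁ ×ₖ K₂) with hβ
  have hmap1 : β.map (fun p => (p.1, p.2.1)) = ρ₁ := by
    rw [hβ, map_compProd_prod_left, hd₁]
  have hmap2 : β.map (fun p => (p.1, p.2.2)) = π₂ := by
    rw [hβ, map_compProd_prod_right, hd₂]
  have hm13 : Measurable fun p : Ed d × Ed d × Ed d => (p.1, p.2.1) :=
    measurable_fst.prodMk measurable_snd.fst
  have hm12 : Measurable fun p : Ed d × Ed d × Ed d => (p.1, p.2.2) :=
    measurable_fst.prodMk measurable_snd.snd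
  refine ⟨β.map Prod.snd, ⟨?_, ?_⟩, ?_⟩
  · -- first marginal is μ
    rw [Measure.map_map measurable_fst measurable_snd]
    have : (Prod.fst ∘ Prod.snd : Ed d × Ed d × Ed d → Ed d)
        = Prod.snd ∘ (fun p => (p.1, p.2.1)) := rfl
    rw [this, ← Measure.map_map measurable_snd hm13, hmap1]
    rw [hρ₁, Measure.map_map measurable_snd measurable_swap]
    exact h₁.1
  · rw [Measure.map_map measurable_snd measurable_snd]
    have : (Prod.snd ∘ Prod.snd : Ed d × Ed d × Ed d → Ed d)
        = Prod.snd ∘ (fun p => (p.1, p.2.2)) := rfl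
    rw [this, ← Measure.map_map measurable_snd hm12, hmap2]
    exact h₂.2
  · -- cost estimate
    have hWc : Wcost (β.map Prod.snd)
        = ∫⁻ p : Ed d × Ed d × Ed d, (‖p.2.1 - p.2.2‖₊ : ℝ≥0∞) ^ 2 ∂β := by
      rw [Wcost, lintegral_map costFn_meas measurable_snd]
    set f : Ed d × Ed d × Ed d → ℝ≥0∞ := fun p => (‖p.2.1 - p.1‖₊ : ℝ≥0∞) with hf
    set g : Ed d × Ed d × Ed d → ℝ≥0∞ := fun p => (‖p.1 - p.2.2‖₊ : ℝ≥0∞) with hg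
    have hfm : Measurable f := (measurable_snd.fst.sub measurable_fst).nnnorm.coe_nnreal_ennreal
    have hgm : Measurable g := (measurable_fst.sub measurable_snd.snd).nnnorm.coe_nnreal_ennreal
    have hpt : ∀ p : Ed d × Ed d × Ed d,
        (‖p.2.1 - p.2.2‖₊ : ℝ≥0∞) ^ (2:ℝ) ≤ (f + g) p ^ (2:ℝ) := by
      intro p
      apply ENNReal.rpow_le_rpow _ (by norm_num)
      have h' : ‖p.2.1 - p.2.2‖₊ ≤ ‖p.2.1 - p.1‖₊ + ‖p.1 - p.2.2‖₊ := by
        simpa using nnnorm_add_le (p.2.1 - p.1) (p.1 - p.2.2)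
      show (‖p.2.1 - p.2.2‖₊ : ℝ≥0∞) ≤ f p + g p
      simp only [hf, hg]
      exact_mod_cast h'
    have key := ENNReal.lintegral_Lp_add_le (μ := β) hfm.aemeasurable hgm.aemeasurable
      (p := 2) (by norm_num)
    have hint1 : ∫⁻ p, f p ^ (2:ℝ) ∂β = Wcost π₁ := by
      have e1 : ∀ p : Ed d × Ed d × Ed d, f p ^ (2:ℝ)
          = (fun q : Ed d × Ed d => (‖q.1 - q.2‖₊ : ℝ≥0∞) ^ 2) ((fun p : Ed d × Ed d × Ed d => (p.2.1, p.1)) p) := by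
        intro p
        simp only [hf]
        rw [← ENNReal.rpow_natCast (‖p.2.1 - p.1‖₊ : ℝ≥0∞) 2]
        norm_num
      calc ∫⁻ p, f p ^ (2:ℝ) ∂β
          = ∫⁻ p, (fun q : Ed d × Ed d => (‖q.1 - q.2‖₊ : ℝ≥0∞) ^ 2)
              ((fun p : Ed d × Ed d × Ed d => (p.2.1, p.1)) p) ∂β := by
            exact lintegral_congr e1
        _ = Wcost (β.map (fun p => (p.2.1, p.1))) := by
            rw [Wcost, lintegral_map costFn_meas (measurable_snd.fst.prodMk measurable_fst)]
        _ = Wcost ((β.map (fun p => (p.1, p.2.1))).map Prod.swap) := by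
            rw [Measure.map_map measurable_swap hm13]
            rfl
        _ = Wcost (ρ₁.map Prod.swap) := by rw [hmap1]
        _ = Wcost ρ₁ := Wcost_swap _
        _ = Wcost π₁ := by rw [hρ₁, Wcost_swap]
    have hint2 : ∫⁻ p, g p ^ (2:ℝ) ∂β = Wcost π₂ := by
      have e1 : ∀ p : Ed d × Ed d × Ed d, g p ^ (2:ℝ)
          = (fun q : Ed d × Ed d => (‖q.1 - q.2‖₊ : ℝ≥0∞) ^ 2) ((fun p : Ed d × Ed d × Ed d => (p.1, p.2.2)) p) := by
        intro p
        simp only [hg]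
        rw [← ENNReal.rpow_natCast (‖p.1 - p.2.2‖₊ : ℝ≥0∞) 2]
        norm_num
      calc ∫⁻ p, g p ^ (2:ℝ) ∂β
          = ∫⁻ p, (fun q : Ed d × Ed d => (‖q.1 - q.2‖₊ : ℝ≥0∞) ^ 2)
              ((fun p : Ed d × Ed d × Ed d => (p.1, p.2.2)) p) ∂β := lintegral_congr e1
        _ = Wcost (β.map (fun p => (p.1, p.2.2))) := by
            rw [Wcost, lintegral_map costFn_meas hm12]
        _ = Wcost π₂ := by rw [hmap2]
    have hWc2 : Wcost (β.map Prod.snd) ≤ ∫⁻ p, (f + g) p ^ (2:ℝ) ∂β := by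
      rw [hWc]
      refine le_trans (le_of_eq ?_) (lintegral_mono hpt)
      refine lintegral_congr fun p => ?_
      rw [← ENNReal.rpow_natCast (‖p.2.1 - p.2.2‖₊ : ℝ≥0∞) 2]
      norm_num
    calc Wcost (β.map Prod.snd) ^ (1/2 : ℝ)
        ≤ (∫⁻ p, (f + g) p ^ (2:ℝ) ∂β) ^ (1/2 : ℝ) :=
          ENNReal.rpow_le_rpow hWc2 (by norm_num)
      _ ≤ (∫⁻ p, f p ^ (2:ℝ) ∂β) ^ (1/(2:ℝ)) + (∫⁻ p, g p ^ (2:ℝ) ∂β) ^ (1/(2:ℝ)) := key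
      _ = Wcost π₁ ^ (1/2 : ℝ) + Wcost π₂ ^ (1/2 : ℝ) := by rw [hint1, hint2]

end S6
namespace S6
open ProbabilityTheory
variable {d : ℕ}

lemma sqrt_toReal_rpow {A : ℝ≥0∞} : Real.sqrt A.toReal = (A ^ (1/2 : ℝ)).toReal := by
  rw [Real.sqrt_eq_rpow, ENNReal.toReal_rpow]

lemma W2_le_sqrt_Wcost {π : Measure (Ed d × Ed d)} {μ ν : P2 d} (h : IsCoupling π μ ν)
    (hfin : Wcost π ≠ ⊤) : W2 μ ν ≤ Real.sqrt (Wcost π).toReal := by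
  rw [W2_eq]
  exact Real.sqrt_le_sqrt (ENNReal.toReal_le_toReal (W2sq_lt_top μ ν).ne hfin |>.2
    (W2sq_le_Wcost h))

lemma W2_triangle (μ ν ρ : P2 d) : W2 μ ρ ≤ W2 μ ν + W2 ν ρ := by
  refine le_of_forall_pos_le_add fun η hη => ?_
  set η' : ℝ≥0∞ := ENNReal.ofReal ((η/3) ^ 2) with hη'
  have hη'0 : 0 < η' := ENNReal.ofReal_pos.2 (by positivity)
  obtain ⟨π₁, hc₁, hlt₁, hfin₁⟩ := exists_coupling_lt μ ν hη'0
  obtain ⟨π₂, hc₂, hlt₂, hfin₂⟩ := exists_coupling_lt ν ρ hη'0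
  obtain ⟨π₃, hc₃, hcost⟩ := glue hc₁ hc₂
  have hfin₃ : Wcost π₃ ≠ ⊤ := by
    intro htop
    rw [htop] at hcost
    have : (⊤ : ℝ≥0∞) ^ (1/2 : ℝ) = ⊤ := ENNReal.top_rpow_of_pos (by norm_num)
    rw [this] at hcost
    have h1 : Wcost π₁ ^ (1/2 : ℝ) ≠ ⊤ :=
      ENNReal.rpow_ne_top_of_nonneg (by norm_num : (0:ℝ) ≤ 1/2) hfin₁
    have h2 : Wcost π₂ ^ (1/2 : ℝ) ≠ ⊤ :=
      ENNReal.rpow_ne_top_of_nonneg (by norm_num : (0:ℝ) ≤ 1/2) hfin₂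
    exact (ENNReal.add_lt_top.2 ⟨lt_top_iff_ne_top.2 h1, lt_top_iff_ne_top.2 h2⟩).ne
      (top_le_iff.1 hcost)
  have hreal : Real.sqrt (Wcost π₃).toReal
      ≤ Real.sqrt (Wcost π₁).toReal + Real.sqrt (Wcost π₂).toReal := by
    rw [sqrt_toReal_rpow, sqrt_toReal_rpow, sqrt_toReal_rpow, ← ENNReal.toReal_add
      (ENNReal.rpow_ne_top_of_nonneg (by norm_num) hfin₁)
      (ENNReal.rpow_ne_top_of_nonneg (by norm_num) hfin₂)]
    exact ENNReal.toReal_mono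
      (ENNReal.add_ne_top.2 ⟨ENNReal.rpow_ne_top_of_nonneg (by norm_num) hfin₁,
        ENNReal.rpow_ne_top_of_nonneg (by norm_num) hfin₂⟩) hcost
  have hb₁ : Real.sqrt (Wcost π₁).toReal ≤ W2 μ ν + η/3 := by
    have h1 : (Wcost π₁).toReal ≤ (W2sq μ ν).toReal + (η/3)^2 := by
      have := ENNReal.toReal_mono (by
          exact ENNReal.add_ne_top.2 ⟨(W2sq_lt_top μ ν).ne, ENNReal.ofReal_ne_top⟩)
        hlt₁.le
      rwa [ENNReal.toReal_add (W2sq_lt_top μ ν).ne ENNReal.ofReal_ne_top,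
        ENNReal.toReal_ofReal (by positivity)] at this
    calc Real.sqrt (Wcost π₁).toReal ≤ Real.sqrt ((W2sq μ ν).toReal + (η/3)^2) :=
          Real.sqrt_le_sqrt h1
      _ ≤ Real.sqrt (W2sq μ ν).toReal + Real.sqrt ((η/3)^2) := by
          have h2 : (0:ℝ) ≤ (W2sq μ ν).toReal := ENNReal.toReal_nonneg
          have h3 : (0:ℝ) ≤ (η/3)^2 := by positivity
          nlinarith [Real.sq_sqrt h2, Real.sq_sqrt h3, Real.sqrt_nonneg ((W2sq μ ν).toReal),
            Real.sqrt_nonneg ((η/3)^2), Real.sqrt_nonneg ((W2sq μ ν).toReal + (η/3)^2),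
            Real.sq_sqrt (by positivity : (0:ℝ) ≤ (W2sq μ ν).toReal + (η/3)^2)]
      _ = W2 μ ν + η/3 := by
          rw [Real.sqrt_sq (by positivity), W2_eq]
  have hb₂ : Real.sqrt (Wcost π₂).toReal ≤ W2 ν ρ + η/3 := by
    have h1 : (Wcost π₂).toReal ≤ (W2sq ν ρ).toReal + (η/3)^2 := by
      have := ENNReal.toReal_mono (by
          exact ENNReal.add_ne_top.2 ⟨(W2sq_lt_top ν ρ).ne, ENNReal.ofReal_ne_top⟩)
        hlt₂.le
      rwa [ENNReal.toReal_add (W2sq_lt_top ν ρ).ne ENNReal.ofReal_ne_top,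
        ENNReal.toReal_ofReal (by positivity)] at this
    calc Real.sqrt (Wcost π₂).toReal ≤ Real.sqrt ((W2sq ν ρ).toReal + (η/3)^2) :=
          Real.sqrt_le_sqrt h1
      _ ≤ Real.sqrt (W2sq ν ρ).toReal + Real.sqrt ((η/3)^2) := by
          have h2 : (0:ℝ) ≤ (W2sq ν ρ).toReal := ENNReal.toReal_nonneg
          have h3 : (0:ℝ) ≤ (η/3)^2 := by positivity
          nlinarith [Real.sq_sqrt h2, Real.sq_sqrt h3, Real.sqrt_nonneg ((W2sq ν ρ).toReal),
            Real.sqrt_nonneg ((η/3)^2), Real.sqrt_nonneg ((W2sq ν ρ).toReal + (η/3)^2),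
            Real.sq_sqrt (by positivity : (0:ℝ) ≤ (W2sq ν ρ).toReal + (η/3)^2)]
      _ = W2 ν ρ + η/3 := by
          rw [Real.sqrt_sq (by positivity), W2_eq]
  have := W2_le_sqrt_Wcost hc₃ hfin₃
  linarith

end S6
namespace S6
open ProbabilityTheory
variable {d : ℕ}

def geoMap (t : ℝ) : Ed d × Ed d → Ed d := fun p => (1 - t) • p.1 + t • p.2

lemma geoMap_meas (t : ℝ) : Measurable (geoMap (d := d) t) :=
  by unfold geoMap; fun_prop

lemma geoMap_nnnorm_sq {t : ℝ} (ht : t ∈ Icc (0:ℝ) 1) (x y : Ed d) :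
    (‖geoMap t (x, y)‖₊ : ℝ≥0∞) ^ 2 ≤ 2 * (‖x‖₊ : ℝ≥0∞) ^ 2 + 2 * (‖y‖₊ : ℝ≥0∞) ^ 2 := by
  refine le_trans ?_ (ennreal_add_sq_le _ _)
  have hR : ‖geoMap t (x, y)‖ ≤ ‖x‖ + ‖y‖ := by
    have h1 : ‖geoMap t (x, y)‖ ≤ ‖(1 - t) • x‖ + ‖t • y‖ := norm_add_le _ _
    rw [norm_smul, norm_smul, Real.norm_eq_abs, Real.norm_eq_abs] at h1
    have h2 : |1 - t| ≤ 1 := by rw [abs_le]; constructor <;> [linarith [ht.2]; linarith [ht.1]]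
    have h3 : |t| ≤ 1 := by rw [abs_le]; constructor <;> [linarith [ht.1]; linarith [ht.2]]
    nlinarith [norm_nonneg x, norm_nonneg y, abs_nonneg (1 - t), abs_nonneg t]
  have hn : ‖geoMap t (x, y)‖₊ ≤ ‖x‖₊ + ‖y‖₊ := by
    rw [← NNReal.coe_le_coe]
    push_cast
    exact hR
  have : (‖geoMap t (x, y)‖₊ : ℝ≥0∞) ≤ (‖x‖₊ : ℝ≥0∞) + (‖y‖₊ : ℝ≥0∞) := by exact_mod_cast hn
  exact pow_le_pow_left' this 2

/-- Geodesic-type interpolation along a coupling, as an element of `P2 d`. -/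
def geoP {ν₁ ν₂ : P2 d} {π : Measure (Ed d × Ed d)} (h : IsCoupling π ν₁ ν₂)
    {t : ℝ} (ht : t ∈ Icc (0:ℝ) 1) : P2 d := by
  refine ⟨π.map (geoMap t), ?_, ?_⟩
  · haveI := isProb_coupling h
    exact Measure.isProbabilityMeasure_map (geoMap_meas t).aemeasurable
  · have hmeas1 : Measurable fun x : Ed d => (‖x‖₊ : ℝ≥0∞) ^ 2 :=
      (measurable_nnnorm.coe_nnreal_ennreal).pow_const 2
    rw [lintegral_map hmeas1 (geoMap_meas t)]
    calc ∫⁻ p, (‖geoMap t p‖₊ : ℝ≥0∞) ^ 2 ∂π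
        ≤ ∫⁻ p : Ed d × Ed d, (2 * (‖p.1‖₊ : ℝ≥0∞) ^ 2 + 2 * (‖p.2‖₊ : ℝ≥0∞) ^ 2) ∂π :=
          lintegral_mono fun p => geoMap_nnnorm_sq ht p.1 p.2
      _ = 2 * mom ν₁ + 2 * mom ν₂ := by
          have e1 : ∫⁻ p : Ed d × Ed d, (2 * (‖p.1‖₊ : ℝ≥0∞) ^ 2 + 2 * (‖p.2‖₊ : ℝ≥0∞) ^ 2) ∂π
              = (∫⁻ p : Ed d × Ed d, 2 * (‖p.1‖₊ : ℝ≥0∞) ^ 2 ∂π)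
                + ∫⁻ p : Ed d × Ed d, 2 * (‖p.2‖₊ : ℝ≥0∞) ^ 2 ∂π :=
            lintegral_add_left ((hmeas1.comp measurable_fst).const_mul 2) _
          have e2 : ∫⁻ p : Ed d × Ed d, 2 * (‖p.1‖₊ : ℝ≥0∞) ^ 2 ∂π
              = 2 * ∫⁻ p : Ed d × Ed d, (‖p.1‖₊ : ℝ≥0∞) ^ 2 ∂π :=
            lintegral_const_mul 2 (hmeas1.comp measurable_fst)
          have e3 : ∫⁻ p : Ed d × Ed d, 2 * (‖p.2‖₊ : ℝ≥0∞) ^ 2 ∂π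
              = 2 * ∫⁻ p : Ed d × Ed d, (‖p.2‖₊ : ℝ≥0∞) ^ 2 ∂π :=
            lintegral_const_mul 2 (hmeas1.comp measurable_snd)
          rw [e1, e2, e3, lintegral_fst_coupling h hmeas1, lintegral_snd_coupling h hmeas1]
          rfl
      _ < ⊤ := ENNReal.add_lt_top.2 ⟨ENNReal.mul_lt_top (by simp) (mom_lt_top ν₁),
          ENNReal.mul_lt_top (by simp) (mom_lt_top ν₂)⟩

lemma geoP_zero {ν₁ ν₂ : P2 d} {π : Measure (Ed d × Ed d)} (h : IsCoupling π ν₁ ν₂) :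
    geoP h (left_mem_Icc.2 zero_le_one) = ν₁ := by
  apply Subtype.ext
  show π.map (geoMap 0) = ν₁.1
  have : geoMap (d := d) 0 = Prod.fst := by
    funext p; simp [geoMap]
  rw [this, h.1]

lemma geoP_one {ν₁ ν₂ : P2 d} {π : Measure (Ed d × Ed d)} (h : IsCoupling π ν₁ ν₂) :
    geoP h (right_mem_Icc.2 zero_le_one) = ν₂ := by
  apply Subtype.ext
  show π.map (geoMap 1) = ν₂.1
  have : geoMap (d := d) 1 = Prod.snd := by
    funext p; simp [geoMap]
  rw [this, h.2]

lemma geoP_W2 {ν₁ ν₂ : P2 d} {π : Measure (Ed d × Ed d)} (h : IsCoupling π ν₁ ν₂)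
    (hfin : Wcost π ≠ ⊤) {s t : ℝ} (hs : s ∈ Icc (0:ℝ) 1) (ht : t ∈ Icc (0:ℝ) 1) :
    W2 (geoP h hs) (geoP h ht) ≤ |t - s| * Real.sqrt (Wcost π).toReal := by
  have hmeas : Measurable fun p : Ed d × Ed d => (geoMap (d := d) s p, geoMap (d := d) t p) :=
    (geoMap_meas s).prodMk (geoMap_meas t)
  have hc : IsCoupling (π.map fun p => (geoMap s p, geoMap t p)) (geoP h hs) (geoP h ht) := by
    constructor
    · rw [Measure.map_map measurable_fst hmeas]; rfl
    · rw [Measure.map_map measurable_snd hmeas]; rfl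
  have hcost : Wcost (π.map fun p => (geoMap s p, geoMap t p))
      = ((‖t - s‖₊ : ℝ≥0∞)) ^ 2 * Wcost π := by
    rw [Wcost, lintegral_map costFn_meas hmeas]
    have e : ∀ p : Ed d × Ed d, (‖geoMap s p - geoMap t p‖₊ : ℝ≥0∞) ^ 2
        = ((‖t - s‖₊ : ℝ≥0∞)) ^ 2 * (‖p.1 - p.2‖₊ : ℝ≥0∞) ^ 2 := by
      intro p
      have he : geoMap (d := d) s p - geoMap t p = (t - s) • (p.1 - p.2) := by
        simp only [geoMap]
        module
      rw [he, nnnorm_smul]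
      push_cast
      ring
    rw [lintegral_congr e, lintegral_const_mul _ costFn_meas]
    rfl
  have hfin' : Wcost (π.map fun p => (geoMap s p, geoMap t p)) ≠ ⊤ := by
    rw [hcost]
    exact ENNReal.mul_ne_top (by simp [ENNReal.pow_ne_top]) hfin
  refine le_trans (W2_le_sqrt_Wcost hc hfin') ?_
  rw [hcost, ENNReal.toReal_mul]
  rw [Real.sqrt_mul (by positivity)]
  have : ((((‖t - s‖₊ : ℝ≥0∞)) ^ 2).toReal) = |t - s| ^ 2 := by
    rw [ENNReal.toReal_pow, ENNReal.coe_toReal, coe_nnnorm, Real.norm_eq_abs]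
  rw [this, Real.sqrt_sq (abs_nonneg _)]

lemma geoP_congr {ν₁ ν₂ : P2 d} {π : Measure (Ed d × Ed d)} (h : IsCoupling π ν₁ ν₂)
    {t₁ t₂ : ℝ} (ht₁ : t₁ ∈ Icc (0:ℝ) 1) (ht₂ : t₂ ∈ Icc (0:ℝ) 1) (e : t₁ = t₂) :
    geoP h ht₁ = geoP h ht₂ := by subst e; rfl

/-- `φ` is bounded on `W2`-balls around `mhat`. -/
lemma bdd_on_ball (mhat : P2 d) (φ : P2 d → ℝ) (hφ : UCmem mhat φ) (M : ℝ) (hM : 0 ≤ M) :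
    ∃ C : ℝ, 0 ≤ C ∧ ∀ ν : P2 d, W2 mhat ν ≤ M → φ ν ≤ C := by
  obtain ⟨δ, hδ0, hδ⟩ := hφ.unif_cont (M + 1) (by linarith) 1 one_pos
  obtain ⟨n, hn⟩ := exists_nat_gt ((M + 1) / δ)
  have hn0 : 0 < (n:ℝ) := lt_of_le_of_lt (by positivity) hn
  refine ⟨n, by positivity, fun ν hν => ?_⟩
  -- choose a coupling with cost < (M+1)^2
  have hpos : (0:ℝ≥0∞) < ENNReal.ofReal (2*M+1) := ENNReal.ofReal_pos.2 (by linarith)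
  obtain ⟨π, hc, hlt, hfin⟩ := exists_coupling_lt mhat ν hpos
  have hL : Real.sqrt (Wcost π).toReal ≤ M + 1 := by
    have h1 : (Wcost π).toReal ≤ (W2sq mhat ν).toReal + (2*M+1) := by
      have := ENNReal.toReal_mono
        (ENNReal.add_ne_top.2 ⟨(W2sq_lt_top mhat ν).ne, ENNReal.ofReal_ne_top⟩) hlt.le
      rwa [ENNReal.toReal_add (W2sq_lt_top mhat ν).ne ENNReal.ofReal_ne_top,
        ENNReal.toReal_ofReal (by linarith)] at this
    have h2 : (W2sq mhat ν).toReal ≤ M ^ 2 := by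
      have := sq_W2 mhat ν
      nlinarith [W2_nonneg mhat ν, hν]
    have h3 : (Wcost π).toReal ≤ (M+1)^2 := by nlinarith
    calc Real.sqrt (Wcost π).toReal ≤ Real.sqrt ((M+1)^2) := Real.sqrt_le_sqrt h3
      _ = M + 1 := Real.sqrt_sq (by linarith)
  -- the interpolation points
  have hmem : ∀ i : ℕ, i ≤ n → ((i:ℝ)/n) ∈ Icc (0:ℝ) 1 := by
    intro i hi
    constructor
    · positivity
    · rw [div_le_one hn0]; exact_mod_cast hi
  have hWt : ∀ {t : ℝ} (ht : t ∈ Icc (0:ℝ) 1), W2 mhat (geoP hc ht) ≤ M + 1 := by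
    intro t ht
    have h0 := geoP_W2 hc hfin (left_mem_Icc.2 zero_le_one) ht
    rw [geoP_zero hc] at h0
    calc W2 mhat (geoP hc ht) ≤ |t - 0| * Real.sqrt (Wcost π).toReal := h0
      _ ≤ 1 * (M + 1) := by
          apply mul_le_mul _ hL (Real.sqrt_nonneg _) zero_le_one
          rw [sub_zero, abs_le]; exact ⟨by linarith [ht.1], ht.2⟩
      _ = M + 1 := one_mul _
  have hstep : ((M+1)/n : ℝ) ≤ δ := by
    rw [div_le_iff₀ hn0]
    have : (M+1) < δ * n := by
      rw [div_lt_iff₀ hδ0] at hn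
      linarith
    linarith
  have hkey : ∀ i : ℕ, (hi : i ≤ n) → φ (geoP hc (hmem i hi)) ≤ i := by
    intro i
    induction i with
    | zero =>
      intro hi
      have h0 : geoP hc (hmem 0 hi) = mhat := by
        rw [geoP_congr hc _ (left_mem_Icc.2 zero_le_one) (by simp)]
        exact geoP_zero hc
      rw [h0, hφ.zero_at]
      simp
    | succ k ih =>
      intro hi
      have hk : k ≤ n := le_trans (Nat.le_succ k) hi
      have hclose : W2 (geoP hc (hmem k hk)) (geoP hc (hmem (k+1) hi)) ≤ δ := by
        refine le_trans (geoP_W2 hc hfin _ _) ?_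
        have he : |((k+1:ℕ):ℝ)/n - ((k:ℕ):ℝ)/n| = 1/n := by
          push_cast
          rw [div_sub_div_same, add_sub_cancel_left, abs_of_nonneg (by positivity)]
        rw [he]
        calc (1/n : ℝ) * Real.sqrt (Wcost π).toReal ≤ (1/n) * (M+1) := by
              apply mul_le_mul_of_nonneg_left hL (by positivity)
          _ = (M+1)/n := by ring
          _ ≤ δ := hstep
      have habs := hδ (geoP hc (hmem k hk)) (geoP hc (hmem (k+1) hi))
        (hWt _) (hWt _) hclose
      have := abs_le.1 habs
      have hik := ih hk
      have hc1 : ((k+1:ℕ):ℝ) = (k:ℝ) + 1 := by push_cast; ring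
      refine le_trans ?_ (le_of_eq hc1.symm)
      linarith [this.1, this.2]
  have hfin' : φ (geoP hc (hmem n le_rfl)) ≤ n := hkey n le_rfl
  have hend : geoP hc (hmem n le_rfl) = ν := by
    rw [geoP_congr hc _ (right_mem_Icc.2 zero_le_one) (by field_simp)]
    exact geoP_one hc
  rwa [hend] at hfin'

end S6
namespace S6
variable {d : ℕ}

lemma sqrt_add_le {a b : ℝ} (ha : 0 ≤ a) (hb : 0 ≤ b) :
    Real.sqrt (a + b) ≤ Real.sqrt a + Real.sqrt b := by
  nlinarith [Real.sq_sqrt ha, Real.sq_sqrt hb, Real.sqrt_nonneg a, Real.sqrt_nonneg b,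
    Real.sq_sqrt (by linarith : (0:ℝ) ≤ a + b), Real.sqrt_nonneg (a + b)]

end S6

set_option maxHeartbeats 2000000 in
/-- `φ − φ_κ` is small on bounded sets. -/
theorem statement6 {d : ℕ} (mhat : P2 d) (R : ℝ) (hR : 0 < R)
    (φ : P2 d → ℝ) (hφ : UCmem mhat φ) (κ ε : ℝ) (hκ : κ ∈ Ioc (0 : ℝ) 1)
    (hε : ε ∈ Ioc (0 : ℝ) 1)
    (m : P2 d) (hm : W2 mhat m ≤ R) (hek : ∃ μb : P2 d, EkelandPt φ κ ε m μb) :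
    φ m - infConv φ κ m ≤ omegaR mhat φ ε R (Mke mhat φ κ ε R) + Nke mhat φ κ ε R m := by
  open S6 in
  obtain ⟨κ0, κ1⟩ := hκ
  obtain ⟨ε0, ε1⟩ := hε
  obtain ⟨μb, hek1, hek2⟩ := hek
  haveI : Nonempty (P2 d) := ⟨mhat⟩
  set S := Sfun mhat φ R with hSdef
  -- S is a genuine sup, nonneg, and φ m ≤ S
  obtain ⟨C₀, hC₀0, hC₀⟩ := S6.bdd_on_ball mhat φ hφ R hR.le
  have hSb : BddAbove (φ '' ballW mhat R) := by
    refine ⟨C₀, fun y hy => ?_⟩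
    obtain ⟨ν, hν, rfl⟩ := hy
    exact hC₀ ν hν
  have hmhat_mem : mhat ∈ ballW mhat R := by
    show W2 mhat mhat ≤ R
    rw [S6.W2_self]; exact hR.le
  have hS0 : 0 ≤ S := by
    have := le_csSup hSb ⟨mhat, hmhat_mem, rfl⟩
    rwa [hφ.zero_at] at this
  have hφmS : φ m ≤ S := le_csSup hSb ⟨m, hm, rfl⟩
  set w := W2 m μb with hwdef
  have hw0 : 0 ≤ w := S6.W2_nonneg m μb
  have hsymm : W2 μb m = w := by rw [hwdef, S6.W2_symm]
  rw [hsymm] at hek1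
  have hineq : 1 / (2 * κ ^ 2) * w ^ 2 + ε * w ≤ S := by
    have := hφ.nonneg μb
    linarith
  set Mk := Mke mhat φ κ ε R with hMkdef
  have hMkval : Mk = κ * Real.sqrt (2 * S + ε ^ 2 * κ ^ 2) - ε * κ ^ 2 := rfl
  have hκ2 : (0:ℝ) < 2 * κ ^ 2 := by positivity
  have h2 : w ^ 2 + 2 * ε * κ ^ 2 * w ≤ 2 * κ ^ 2 * S := by
    have h := mul_le_mul_of_nonneg_left hineq hκ2.le
    calc w ^ 2 + 2 * ε * κ ^ 2 * w
        = 2 * κ ^ 2 * (1 / (2 * κ ^ 2) * w ^ 2 + ε * w) := by field_simp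
      _ ≤ 2 * κ ^ 2 * S := h
  have hwM : w ≤ Mk := by
    have hsq : (w + ε * κ ^ 2) ^ 2 ≤ κ ^ 2 * (2 * S + ε ^ 2 * κ ^ 2) := by nlinarith
    have hle : w + ε * κ ^ 2 ≤ Real.sqrt (κ ^ 2 * (2 * S + ε ^ 2 * κ ^ 2)) :=
      (Real.le_sqrt (by positivity) (by positivity)).2 hsq
    rw [Real.sqrt_mul (sq_nonneg κ), Real.sqrt_sq κ0.le] at hle
    rw [hMkval]
    linarith
  have hsqeps : Real.sqrt (ε ^ 2 * κ ^ 2) = ε * κ := by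
    rw [show ε ^ 2 * κ ^ 2 = (ε * κ) ^ 2 by ring, Real.sqrt_sq (by positivity)]
  have hMk0 : 0 ≤ Mk := by
    have h1 : Real.sqrt (ε ^ 2 * κ ^ 2) ≤ Real.sqrt (2 * S + ε ^ 2 * κ ^ 2) :=
      Real.sqrt_le_sqrt (by linarith)
    rw [hsqeps] at h1
    have := mul_le_mul_of_nonneg_left h1 κ0.le
    rw [hMkval]
    nlinarith
  set Me' := Me mhat φ ε R with hMedef
  have hMe'val : Me' = R + Real.sqrt (2 * S + ε ^ 2) := rfl
  have hMkMe : R + Mk ≤ Me' := by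
    have h1 : κ * Real.sqrt (2 * S + ε ^ 2 * κ ^ 2)
        = Real.sqrt (κ ^ 2 * (2 * S + ε ^ 2 * κ ^ 2)) := by
      rw [Real.sqrt_mul (sq_nonneg κ), Real.sqrt_sq κ0.le]
    have h2' : Real.sqrt (κ ^ 2 * (2 * S + ε ^ 2 * κ ^ 2)) ≤ Real.sqrt (2 * S + ε ^ 2) := by
      apply Real.sqrt_le_sqrt
      have hκsq : κ ^ 2 ≤ 1 := by nlinarith
      have t1 : κ ^ 2 * (2 * S) ≤ 2 * S := by nlinarith
      have t2 : κ ^ 2 * (ε ^ 2 * κ ^ 2) ≤ ε ^ 2 := by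
        have h4 : κ ^ 2 * κ ^ 2 ≤ 1 := by nlinarith
        have h5 := mul_le_mul_of_nonneg_left h4 (sq_nonneg ε)
        nlinarith [h5]
      nlinarith [t1, t2]
    rw [hMkval, hMe'val]
    nlinarith [h1, h2']
  have hRMe : R ≤ Me' := by
    rw [hMe'val]
    have := Real.sqrt_nonneg (2 * S + ε ^ 2)
    linarith
  have hMe0 : 0 ≤ Me' := le_trans hR.le hRMe
  have hWmb : W2 mhat μb ≤ Me' :=
    le_trans (S6.W2_triangle mhat m μb) (by linarith [hm, hwM])
  -- the omega term
  obtain ⟨C, hC0, hC⟩ := S6.bdd_on_ball mhat φ hφ Me' hMe0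
  have hbdd : BddAbove {c : ℝ | ∃ ν₁ ν₂ : P2 d, W2 ν₁ ν₂ ≤ Mk ∧ W2 mhat ν₁ ≤ Me' ∧
      W2 mhat ν₂ ≤ Me' ∧ c = |φ ν₁ - φ ν₂|} := by
    refine ⟨C, fun x hx => ?_⟩
    obtain ⟨ν₁, ν₂, h1, h2, h3, rfl⟩ := hx
    rw [abs_le]
    constructor
    · linarith [hφ.nonneg ν₁, hC ν₂ h3]
    · linarith [hφ.nonneg ν₂, hC ν₁ h2]
  have hω : φ m - φ μb ≤ omegaR mhat φ ε R Mk := by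
    have hmem : |φ m - φ μb| ∈ {c : ℝ | ∃ ν₁ ν₂ : P2 d, W2 ν₁ ν₂ ≤ Mk ∧ W2 mhat ν₁ ≤ Me' ∧
        W2 mhat ν₂ ≤ Me' ∧ c = |φ ν₁ - φ ν₂|} :=
      ⟨m, μb, hwM, le_trans hm hRMe, hWmb, rfl⟩
    exact le_trans (le_abs_self _) (le_csSup hbdd hmem)
  set φκ := infConv φ κ m with hφκdef
  have hφκ0 : 0 ≤ φκ :=
    Real.iInf_nonneg fun μ => add_nonneg (hφ.nonneg μ) (by positivity)
  -- final estimate with slack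
  refine le_of_forall_pos_le_add fun ζ hζ => ?_
  set η := min (ζ / 2) ((ζ / (2 * ε * κ)) ^ 2 / 2) with hηdef
  have hη0 : 0 < η := lt_min (by linarith) (by positivity)
  obtain ⟨μη, hμη⟩ : ∃ μη : P2 d, φ μη + 1 / (2 * κ ^ 2) * W2 m μη ^ 2 < φκ + η := by
    apply exists_lt_of_ciInf_lt
    show infConv φ κ m < φκ + η
    linarith
  set wη := W2 m μη with hwηdef
  have hwη0 : 0 ≤ wη := S6.W2_nonneg m μη
  have hwη : wη ≤ κ * Real.sqrt (2 * φκ) + κ * Real.sqrt (2 * η) := by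
    have h1 : wη ^ 2 ≤ 2 * κ ^ 2 * (φκ + η) := by
      have h := hφ.nonneg μη
      have h' : 1 / (2 * κ ^ 2) * wη ^ 2 ≤ φκ + η := by linarith
      have := mul_le_mul_of_nonneg_left h' hκ2.le
      calc wη ^ 2 = 2 * κ ^ 2 * (1 / (2 * κ ^ 2) * wη ^ 2) := by field_simp
        _ ≤ 2 * κ ^ 2 * (φκ + η) := this
    have h2' : wη ≤ Real.sqrt (κ ^ 2 * (2 * φκ + 2 * η)) := by
      have hnn : (0:ℝ) ≤ κ ^ 2 * (2 * φκ + 2 * η) :=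
        mul_nonneg (sq_nonneg κ) (by linarith)
      apply (Real.le_sqrt hwη0 hnn).2
      nlinarith
    rw [Real.sqrt_mul (sq_nonneg κ), Real.sqrt_sq κ0.le] at h2'
    have h3 : Real.sqrt (2 * φκ + 2 * η) ≤ Real.sqrt (2 * φκ) + Real.sqrt (2 * η) :=
      S6.sqrt_add_le (by linarith) (by linarith)
    calc wη ≤ κ * Real.sqrt (2 * φκ + 2 * η) := h2'
      _ ≤ κ * (Real.sqrt (2 * φκ) + Real.sqrt (2 * η)) :=
          mul_le_mul_of_nonneg_left h3 κ0.le
      _ = κ * Real.sqrt (2 * φκ) + κ * Real.sqrt (2 * η) := by ring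
  have htri : W2 μb μη ≤ w + wη := by
    have := S6.W2_triangle μb m μη
    rw [hsymm] at this
    exact this
  have hek2' := hek2 μη
  have hμb_up : φ μb ≤ φκ + η + ε * (w + wη) := by
    have hcw : 0 ≤ 1 / (2 * κ ^ 2) * w ^ 2 := by positivity
    have hW : ε * W2 μb μη ≤ ε * (w + wη) := mul_le_mul_of_nonneg_left htri ε0.le
    linarith
  have hNke : Nke mhat φ κ ε R m = ε * κ * Real.sqrt (2 * φκ) + ε * Mk := rfl
  have hslack : η + ε * κ * Real.sqrt (2 * η) ≤ ζ := by
    have hη1 : η ≤ ζ / 2 := min_le_left _ _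
    have hη2 : η ≤ (ζ / (2 * ε * κ)) ^ 2 / 2 := min_le_right _ _
    have h1 : Real.sqrt (2 * η) ≤ ζ / (2 * ε * κ) := by
      rw [show ζ / (2 * ε * κ) = Real.sqrt ((ζ / (2 * ε * κ)) ^ 2) from
        (Real.sqrt_sq (by positivity)).symm]
      apply Real.sqrt_le_sqrt
      linarith
    have h2' : ε * κ * Real.sqrt (2 * η) ≤ ε * κ * (ζ / (2 * ε * κ)) :=
      mul_le_mul_of_nonneg_left h1 (by positivity)
    have h3 : ε * κ * (ζ / (2 * ε * κ)) = ζ / 2 := by field_simp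
    linarith
  have hwεbound : ε * (w + wη) ≤ ε * Mk + ε * κ * Real.sqrt (2 * φκ)
      + ε * κ * Real.sqrt (2 * η) := by
    have := mul_le_mul_of_nonneg_left (add_le_add hwM hwη) ε0.le
    nlinarith [this]
  calc φ m - φκ = (φ m - φ μb) + (φ μb - φκ) := by ring
    _ ≤ omegaR mhat φ ε R Mk + (η + ε * (w + wη)) := by linarith
    _ ≤ omegaR mhat φ ε R Mk + (ε * Mk + ε * κ * Real.sqrt (2 * φκ))
        + (η + ε * κ * Real.sqrt (2 * η)) := by linarith
    _ ≤ omegaR mhat φ ε R Mk + Nke mhat φ κ ε R m + ζ := by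
        rw [hNke]; linarith
end
end
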